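/- arXiv:2512.14221 — 4 statements merged into one kernel-verified Lean document; each statement's English description precedes it below -/
import Mathlib

section
/- Let (Z, 𝒵) be a measurable space, let Q and P be probability measures on Z, let ω̃ : Z → [0,∞) be measurable with ∫ ω̃ dQ = 1, and let P̃ be the probability measure with density ω̃ with respect to Q. On a common probability space, let Z^1, …, Z^n be i.i.d. with law Q and let Z^{n+1} have law P, with Z^1, …, Z^{n+1} mutually independent. Let V : Z → ℝ be measurable and α ∈ (0,1). Define the weights p_i := ω̃(Z^i) / (Σ_{j=1}^n ω̃(Z^j) + ω̃(Z^{n+1})) for i = 1, …, n+1 (with the convention that the weighted quantile below is +∞ when the denominator is 0). Then P( V(Z^{n+1}) ≤ Quantile_{1−α}( Σ_{i=1}^n p_i δ_{V(Z^i)} + p_{n+1} δ_{+∞} ) ) ≥ 1 − α − d_TV(P̃, P). -/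
open MeasureTheory ProbabilityTheory
open scoped ENNReal

universe u

/-- Measurable space structure on `Option α`, via the identification with `α ⊕ PUnit`. -/
instance optionMeasurableSpace {α : Type u} [MeasurableSpace α] : MeasurableSpace (Option α) :=
  MeasurableSpace.comap (Equiv.optionEquivSumPUnit.{0, u} α) inferInstance

/-- The `β`-quantile of the discrete distribution `∑ i, w i · δ_{v i}` on `ℝ ∪ {+∞}`:
`inf { z ∈ ℝ : ∑_{i : v i ≤ z} w i ≥ β }`, with `inf ∅ = +∞`. -/
noncomputable def wQuantile {ι : Type*} [Fintype ι] (β : ℝ) (w : ι → ℝ) (v : ι → EReal) : EReal :=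
  sInf {z : EReal | ∃ r : ℝ, z = (r : EReal) ∧
    β ≤ ∑ i ∈ Finset.univ.filter (fun i => v i ≤ (r : EReal)), w i}

/-- Total variation distance between two measures. -/
noncomputable def tvDist {Z : Type*} [MeasurableSpace Z] (P Q : Measure Z) : ℝ :=
  ⨆ A : {A : Set Z // MeasurableSet A}, |(P A.1).toReal - (Q A.1).toReal|

/-- The mask operator: coordinate `j` is `NA` (i.e. `none`) if `m j = true`, else `x j`. -/
def maskOp {d : ℕ} (x : Fin d → ℝ) (m : Fin d → Bool) : Fin d → Option ℝ :=
  fun j => if m j then none else some (x j)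

/-- The `β`-quantile of `(∑_{i=1}^n δ_{sc i} + δ_{+∞})/(n+1)`. -/
noncomputable def splitQuantile {n : ℕ} (β : ℝ) (sc : Fin n → ℝ) : EReal :=
  wQuantile β (fun _ : Option (Fin n) => 1 / (n + 1 : ℝ))
    (fun i => i.elim (⊤ : EReal) (fun j => ((sc j : ℝ) : EReal)))

section Quantile
variable {ι : Type*} [Fintype ι] {β : ℝ}

lemma wq_cond_mono {w : ι → ℝ} (hw : ∀ i, 0 ≤ w i) {v : ι → EReal} {r r' : ℝ} (hrr : r ≤ r')
    (h : β ≤ ∑ i ∈ Finset.univ.filter (fun i => v i ≤ (r : EReal)), w i) :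
    β ≤ ∑ i ∈ Finset.univ.filter (fun i => v i ≤ (r' : EReal)), w i := by
  refine h.trans (Finset.sum_le_sum_of_subset_of_nonneg ?_ (fun i _ _ => hw i))
  intro i hi
  simp only [Finset.mem_filter, Finset.mem_univ, true_and] at hi ⊢
  exact hi.trans (by exact_mod_cast EReal.coe_le_coe_iff.2 hrr)

lemma wQuantile_eq_iInf_rat {w : ι → ℝ} (hw : ∀ i, 0 ≤ w i) (v : ι → EReal) :
    wQuantile β w v = ⨅ q : ℚ,
      if β ≤ ∑ i ∈ Finset.univ.filter (fun i => v i ≤ ((q : ℝ) : EReal)), w i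
      then (((q : ℝ) : EReal)) else ⊤ := by
  apply le_antisymm
  · refine le_iInf fun q => ?_
    by_cases h : β ≤ ∑ i ∈ Finset.univ.filter (fun i => v i ≤ ((q : ℝ) : EReal)), w i
    · rw [if_pos h]; exact sInf_le ⟨(q : ℝ), rfl, h⟩
    · rw [if_neg h]; exact le_top
  · refine le_sInf fun z hz => ?_
    obtain ⟨r, rfl, hr⟩ := hz
    refine le_of_forall_gt_imp_ge_of_dense fun c hc => ?_
    induction c with
    | bot => exact absurd hc (by simp)
    | top => exact le_top
    | coe x =>
      have hrx : r < x := by exact_mod_cast hc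
      obtain ⟨q, hq1, hq2⟩ := exists_rat_btwn hrx
      refine (iInf_le _ q).trans ?_
      rw [if_pos (wq_cond_mono hw hq1.le hr)]
      exact_mod_cast hq2.le

lemma measurable_wQuantile {δ : Type*} [MeasurableSpace δ]
    (W : δ → ι → ℝ) (Vv : δ → ι → EReal)
    (hW : ∀ i, Measurable (fun x => W x i)) (hW0 : ∀ x i, 0 ≤ W x i)
    (hV : ∀ (i : ι) (r : ℝ), MeasurableSet {x | Vv x i ≤ (r : EReal)}) :
    Measurable fun x => wQuantile β (W x) (Vv x) := by
  have : (fun x => wQuantile β (W x) (Vv x)) = fun x => ⨅ q : ℚ,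
      if β ≤ ∑ i ∈ Finset.univ.filter (fun i => Vv x i ≤ ((q : ℝ) : EReal)), W x i
      then (((q : ℝ) : EReal)) else ⊤ := by
    funext x; exact wQuantile_eq_iInf_rat (hW0 x) _
  rw [this]
  refine Measurable.iInf fun q => ?_
  refine Measurable.ite ?_ measurable_const measurable_const
  have : {x | β ≤ ∑ i ∈ Finset.univ.filter (fun i => Vv x i ≤ ((q : ℝ) : EReal)), W x i}
      = {x | β ≤ ∑ i : ι, if Vv x i ≤ ((q : ℝ) : EReal) then W x i else 0} := by
    ext x; simp [Finset.sum_filter]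
  rw [this]
  apply measurableSet_le measurable_const
  apply Finset.measurable_sum
  intro i _
  exact Measurable.ite (hV i _) (hW i) measurable_const

end Quantile

section Facts
variable {ι : Type*} [Fintype ι] {β : ℝ}

lemma wQuantile_perm (w : ι → ℝ) (v : ι → EReal) (σ : Equiv.Perm ι) :
    wQuantile β (w ∘ σ) (v ∘ σ) = wQuantile β w v := by
  unfold wQuantile
  congr 1
  ext z
  refine exists_congr fun r => and_congr_right fun _ => ?_
  have hsum : ∀ r : ℝ, ∑ i ∈ Finset.univ.filter (fun i => (v ∘ σ) i ≤ (r : EReal)), (w ∘ σ) i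
      = ∑ i ∈ Finset.univ.filter (fun i => v i ≤ (r : EReal)), w i := by
    intro r
    rw [Finset.sum_filter, Finset.sum_filter]
    exact Fintype.sum_equiv σ _ _ (fun i => rfl)
  constructor <;> intro h <;> refine h.trans (le_of_eq ?_)
  · exact hsum r
  · exact (hsum r).symm

lemma factA {w : ι → ℝ} (hw : ∀ i, 0 ≤ w i) {v v' : ι → EReal} (i0 : ι) (s : ℝ)
    (hv : v i0 = (s : EReal)) (hv' : v' i0 = ⊤) (hagree : ∀ j, j ≠ i0 → v j = v' j) :
    ((s : EReal) ≤ wQuantile β w v' ↔ (s : EReal) ≤ wQuantile β w v) := by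
  constructor
  · -- contrapositive: q < s → q' < s
    intro h
    by_contra hq
    push_neg at hq
    obtain ⟨z, hz, hzs⟩ := sInf_lt_iff.1 hq
    obtain ⟨r, rfl, hr⟩ := hz
    have hrs : r < s := by exact_mod_cast hzs
    -- filters at r coincide for v and v'
    have hfilter : (Finset.univ.filter (fun i => v i ≤ (r : EReal)))
        = Finset.univ.filter (fun i => v' i ≤ (r : EReal)) := by
      ext i
      simp only [Finset.mem_filter, Finset.mem_univ, true_and]
      by_cases hi : i = i0
      · subst hi
        rw [hv, hv']
        constructor
        · intro hle
          exact absurd (by exact_mod_cast hle : s ≤ r) (not_le.2 hrs)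
        · intro hle
          exact absurd hle (by simp)
      · rw [hagree i hi]
    have hr' : β ≤ ∑ i ∈ Finset.univ.filter (fun i => v' i ≤ (r : EReal)), w i := by
      rwa [hfilter] at hr
    have : wQuantile β w v' ≤ (r : EReal) := sInf_le ⟨r, rfl, hr'⟩
    exact absurd (h.trans this) (not_le.2 (by exact_mod_cast hrs))
  · intro h
    refine h.trans (le_sInf fun z hz => ?_)
    obtain ⟨r, rfl, hr⟩ := hz
    refine sInf_le ⟨r, rfl, hr.trans (Finset.sum_le_sum_of_subset_of_nonneg ?_ fun i _ _ => hw i)⟩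
    intro i hi
    simp only [Finset.mem_filter, Finset.mem_univ, true_and] at hi ⊢
    by_cases h0 : i = i0
    · subst h0; rw [hv'] at hi; exact absurd hi (by simp)
    · rwa [hagree i h0]

lemma factB {α : ℝ} (hα0 : 0 < α) (hα1 : α < 1) (w : ι → ℝ) (hw : ∀ i, 0 ≤ w i) (v : ι → ℝ) :
    ∑ i ∈ Finset.univ.filter
        (fun i => ¬ (((v i : ℝ) : EReal) ≤
          wQuantile (1 - α) (fun j => w j / ∑ k, w k) (fun j => ((v j : ℝ) : EReal)))), w i
      ≤ α * ∑ i, w i := by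
  set W := ∑ k, w k with hW
  set p := fun j => w j / W with hp
  set q := wQuantile (1 - α) p (fun j => ((v j : ℝ) : EReal)) with hq
  have hWnn : 0 ≤ W := Finset.sum_nonneg fun i _ => hw i
  rcases eq_or_lt_of_le hWnn with hW0 | hW0
  · -- all weights zero
    have hz : ∀ i ∈ Finset.univ, w i = 0 :=
      (Finset.sum_eq_zero_iff_of_nonneg (fun i _ => hw i)).1 hW0.symm
    have h1 : ∑ i ∈ Finset.univ.filter
        (fun i => ¬ (((v i : ℝ) : EReal) ≤
          wQuantile (1 - α) (fun j => w j / ∑ k, w k) (fun j => ((v j : ℝ) : EReal)))), w i = 0 :=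
      Finset.sum_eq_zero fun i _ => hz i (Finset.mem_univ i)
    rw [h1]; exact mul_nonneg hα0.le hWnn
  · -- main case: show the covered mass is at least (1-α) W
    have hpnn : ∀ i, 0 ≤ p i := fun i => div_nonneg (hw i) hWnn
    have hpsum : ∑ i, p i = 1 := by
      rw [hp, ← Finset.sum_div, ← hW, div_self hW0.ne']
    have hne : (Finset.univ : Finset ι).Nonempty := by
      rcases (Finset.univ : Finset ι).eq_empty_or_nonempty with h | h
      · exfalso; rw [hW, h, Finset.sum_empty] at hW0; exact lt_irrefl 0 hW0
      · exact h
    -- the defining set is nonempty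
    have hcond : ∀ r : ℝ, (∀ i, v i ≤ r) →
        1 - α ≤ ∑ i ∈ Finset.univ.filter (fun i => ((v i : ℝ) : EReal) ≤ (r : EReal)), p i := by
      intro r hr
      have : Finset.univ.filter (fun i => ((v i : ℝ) : EReal) ≤ (r : EReal)) = Finset.univ := by
        refine Finset.filter_true_of_mem fun i _ => ?_
        exact_mod_cast EReal.coe_le_coe_iff.2 (hr i)
      rw [this, hpsum]; linarith
    obtain ⟨rmax, hrmax⟩ : ∃ r : ℝ, ∀ i, v i ≤ r := by
      obtain ⟨r, hr⟩ := Finset.exists_le (Finset.univ.image v)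
      exact ⟨r, fun i => hr _ (Finset.mem_image_of_mem v (Finset.mem_univ i))⟩
    have hSne : q ≤ ((rmax : ℝ) : EReal) := sInf_le ⟨rmax, rfl, hcond rmax hrmax⟩
    -- key: mass at or below q is at least 1 - α
    have hkey : 1 - α ≤ ∑ i ∈ Finset.univ.filter (fun i => ((v i : ℝ) : EReal) ≤ q), p i := by
      by_cases hB : (Finset.univ.filter (fun i => ¬ ((v i : ℝ) : EReal) ≤ q)).Nonempty
      · set B := Finset.univ.filter (fun i => ¬ ((v i : ℝ) : EReal) ≤ q) with hBdef
        obtain ⟨i0, hi0B, hmin⟩ := B.exists_min_image v hB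
        have hi0 : ¬ ((v i0 : ℝ) : EReal) ≤ q := (Finset.mem_filter.1 hi0B).2
        have hqlt : q < ((v i0 : ℝ) : EReal) := not_le.1 hi0
        obtain ⟨z, hz, hzlt⟩ := sInf_lt_iff.1 hqlt
        obtain ⟨r, rfl, hr⟩ := hz
        have hqr : q ≤ (r : EReal) := sInf_le ⟨r, rfl, hr⟩
        refine hr.trans (Finset.sum_le_sum_of_subset_of_nonneg ?_ fun i _ _ => hpnn i)
        intro i hi
        simp only [Finset.mem_filter, Finset.mem_univ, true_and] at hi ⊢
        by_contra hgt
        have hiB : i ∈ B := Finset.mem_filter.2 ⟨Finset.mem_univ i, hgt⟩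
        have h1 : v i0 ≤ v i := hmin i hiB
        have h2 : r < v i0 := by exact_mod_cast hzlt
        have h3 : v i ≤ r := by exact_mod_cast hi
        linarith
      · -- everything is ≤ q
        rw [Finset.not_nonempty_iff_eq_empty, Finset.filter_eq_empty_iff] at hB
        push_neg at hB
        have : Finset.univ.filter (fun i => ((v i : ℝ) : EReal) ≤ q) = Finset.univ :=
          Finset.filter_true_of_mem fun i hi => hB hi
        rw [this, hpsum]; linarith
    -- convert to w-sums
    have hsplit : ∑ i ∈ Finset.univ.filter (fun i => ¬ ((v i : ℝ) : EReal) ≤ q), w i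
        = W - ∑ i ∈ Finset.univ.filter (fun i => ((v i : ℝ) : EReal) ≤ q), w i := by
      rw [eq_sub_iff_add_eq, hW, add_comm]
      exact Finset.sum_filter_add_sum_filter_not _ _ _
    have hwq : ∑ i ∈ Finset.univ.filter (fun i => ((v i : ℝ) : EReal) ≤ q), w i
        = W * ∑ i ∈ Finset.univ.filter (fun i => ((v i : ℝ) : EReal) ≤ q), p i := by
      rw [Finset.mul_sum]
      refine Finset.sum_congr rfl fun i _ => ?_
      rw [hp]; field_simp
    have : (1 - α) * W ≤ ∑ i ∈ Finset.univ.filter (fun i => ((v i : ℝ) : EReal) ≤ q), w i := by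
      rw [hwq]
      calc (1 - α) * W ≤ (∑ i ∈ Finset.univ.filter (fun i => ((v i : ℝ) : EReal) ≤ q), p i) * W :=
            mul_le_mul_of_nonneg_right hkey hWnn
        _ = _ := by ring
    rw [hsplit]
    nlinarith

end Facts


section TV
variable {Z : Type*} [MeasurableSpace Z] (P₁ P₂ : Measure Z)
  [IsFiniteMeasure P₁] [IsFiniteMeasure P₂]

lemma tvDist_bddAbove : BddAbove (Set.range fun A : {A : Set Z // MeasurableSet A} =>
    |(P₁ A.1).toReal - (P₂ A.1).toReal|) := by
  refine ⟨(P₁ Set.univ).toReal + (P₂ Set.univ).toReal, ?_⟩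
  rintro x ⟨⟨A, hA⟩, rfl⟩
  refine (abs_sub _ _).trans ?_
  gcongr
  · rw [abs_of_nonneg ENNReal.toReal_nonneg]
    exact ENNReal.toReal_mono (measure_ne_top _ _) (measure_mono (Set.subset_univ _))
  · rw [abs_of_nonneg ENNReal.toReal_nonneg]
    exact ENNReal.toReal_mono (measure_ne_top _ _) (measure_mono (Set.subset_univ _))

lemma tvDist_nonneg : 0 ≤ tvDist P₁ P₂ := by
  have h := le_ciSup (tvDist_bddAbove P₁ P₂) ⟨∅, MeasurableSet.empty⟩
  exact (by simpa using h : (0:ℝ) ≤ ⨆ A : {A : Set Z // MeasurableSet A}, |(P₁ A.1).toReal - (P₂ A.1).toReal|)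

lemma toReal_sub_le_tvDist {A : Set Z} (hA : MeasurableSet A) :
    (P₁ A).toReal - (P₂ A).toReal ≤ tvDist P₁ P₂ :=
  (le_abs_self _).trans (le_ciSup (tvDist_bddAbove P₁ P₂) ⟨A, hA⟩)

lemma measure_le_add_tvDist {A : Set Z} (hA : MeasurableSet A) :
    P₁ A ≤ P₂ A + ENNReal.ofReal (tvDist P₁ P₂) := by
  have h := toReal_sub_le_tvDist P₁ P₂ hA
  calc P₁ A = ENNReal.ofReal ((P₁ A).toReal) := (ENNReal.ofReal_toReal (measure_ne_top _ _)).symm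
    _ ≤ ENNReal.ofReal ((P₂ A).toReal + tvDist P₁ P₂) := ENNReal.ofReal_le_ofReal (by linarith)
    _ ≤ ENNReal.ofReal ((P₂ A).toReal) + ENNReal.ofReal (tvDist P₁ P₂) := ENNReal.ofReal_add_le
    _ = P₂ A + ENNReal.ofReal (tvDist P₁ P₂) := by
        rw [ENNReal.ofReal_toReal (measure_ne_top _ _)]

end TV

section Layer
variable {Z : Type*} [MeasurableSpace Z] (P₁ P₂ : Measure Z)
  [IsProbabilityMeasure P₁] [IsProbabilityMeasure P₂]

lemma lintegral_le_lintegral_add_tvDist (g : Z → ℝ≥0∞) (hg : Measurable g)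
    (hg1 : ∀ z, g z ≤ 1) :
    ∫⁻ z, g z ∂P₁ ≤ (∫⁻ z, g z ∂P₂) + ENNReal.ofReal (tvDist P₁ P₂) := by
  set f : Z → ℝ := fun z => (g z).toReal with hf
  have hfm : Measurable f := hg.ennreal_toReal
  have hfnn : ∀ z, 0 ≤ f z := fun z => ENNReal.toReal_nonneg
  have hf1 : ∀ z, f z ≤ 1 := fun z => by
    rw [hf]
    calc (g z).toReal ≤ (1 : ℝ≥0∞).toReal :=
      ENNReal.toReal_mono (by simp) (hg1 z)
      _ = 1 := by simp
  have hgof : ∀ z, g z = ENNReal.ofReal (f z) := fun z =>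
    (ENNReal.ofReal_toReal (ne_top_of_le_ne_top (by simp) (hg1 z))).symm
  have key : ∀ (μ : Measure Z), IsProbabilityMeasure μ → ∫⁻ z, g z ∂μ
      = ∫⁻ t in Set.Ioc (0:ℝ) 1, μ {a | t < f a} := by
    intro μ hμ
    have h1 : ∫⁻ z, g z ∂μ = ∫⁻ t in Set.Ioi (0:ℝ), μ {a | t < f a} := by
      simp_rw [hgof]
      exact lintegral_eq_lintegral_meas_lt μ (Filter.Eventually.of_forall hfnn) hfm.aemeasurable
    have hsplit : Set.Ioi (0:ℝ) = Set.Ioc (0:ℝ) 1 ∪ Set.Ioi (1:ℝ) := by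
      rw [Set.Ioc_union_Ioi_eq_Ioi]; norm_num
    have hzero : ∫⁻ t in Set.Ioi (1:ℝ), μ {a | t < f a} = 0 := by
      have : ∀ t ∈ Set.Ioi (1:ℝ), μ {a | t < f a} = 0 := by
        intro t ht
        have : {a | t < f a} = ∅ := by
          ext a; simp only [Set.mem_setOf_eq, Set.mem_empty_iff_false, iff_false, not_lt]
          exact (hf1 a).trans (le_of_lt ht)
        rw [this]; simp
      rw [setLIntegral_congr_fun measurableSet_Ioi
        this]
      simp
    rw [h1, hsplit, lintegral_union measurableSet_Ioi (by
      rw [Set.disjoint_left]; intro t ht ht'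
      exact absurd (Set.mem_Ioi.1 ht') (not_lt.2 (Set.mem_Ioc.1 ht).2)), hzero, add_zero]
  rw [key P₁ inferInstance, key P₂ inferInstance]
  have hbound : ∀ t, P₁ {a | t < f a} ≤ P₂ {a | t < f a} + ENNReal.ofReal (tvDist P₁ P₂) :=
    fun t => measure_le_add_tvDist P₁ P₂ (measurableSet_lt measurable_const hfm)
  calc ∫⁻ t in Set.Ioc (0:ℝ) 1, P₁ {a | t < f a}
      ≤ ∫⁻ t in Set.Ioc (0:ℝ) 1, (P₂ {a | t < f a} + ENNReal.ofReal (tvDist P₁ P₂)) :=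
        lintegral_mono fun t => hbound t
    _ = (∫⁻ t in Set.Ioc (0:ℝ) 1, P₂ {a | t < f a}) + ENNReal.ofReal (tvDist P₁ P₂) := by
        rw [lintegral_add_right _ measurable_const, setLIntegral_const]
        simp [Real.volume_Ioc]

end Layer

section MeasureLemmas
variable {Z : Type*} [MeasurableSpace Z]

lemma withDensity_prod_fst (μ : Measure Z) {Y : Type*} [MeasurableSpace Y] (ν : Measure Y)
    [SigmaFinite μ] [SigmaFinite ν] (f : Z → ℝ≥0∞) (hf : Measurable f)
    [SigmaFinite (μ.withDensity f)] :
    (μ.withDensity f).prod ν = (μ.prod ν).withDensity (fun p => f p.1) := by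
  refine Measure.prod_eq fun s t hs ht => ?_
  rw [withDensity_apply _ (hs.prod ht), ← Measure.prod_restrict,
    lintegral_prod (fun a => f a.1) ((hf.comp measurable_fst).aemeasurable)]
  simp only [lintegral_const]
  rw [lintegral_mul_const _ hf, Measure.restrict_apply_univ, withDensity_apply _ hs]

lemma measurePreserving_comp_perm (Q : Measure Z) [IsProbabilityMeasure Q] {m : ℕ}
    (σ : Equiv.Perm (Fin m)) :
    MeasurePreserving (fun y : Fin m → Z => y ∘ σ)
      (Measure.pi fun _ => Q) (Measure.pi fun _ => Q) := by
  have hmeas : Measurable (fun y : Fin m → Z => y ∘ σ) :=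
    measurable_pi_lambda _ fun i => measurable_pi_apply (σ i)
  refine ⟨hmeas, ?_⟩
  · refine (Measure.pi_eq fun s hs => ?_).symm
    rw [Measure.map_apply hmeas (MeasurableSet.univ_pi hs)]
    have hpre : (fun y : Fin m → Z => y ∘ σ) ⁻¹' Set.pi Set.univ s
        = Set.pi Set.univ (fun j => s (σ.symm j)) := by
      ext y
      simp only [Set.mem_preimage, Set.mem_pi, Set.mem_univ, true_implies, Function.comp]
      exact ⟨fun h j => by simpa using h (σ.symm j), fun h i => by simpa using h (σ i)⟩
    rw [hpre, Measure.pi_pi]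
    exact Fintype.prod_equiv σ.symm _ _ fun j => rfl

lemma map_eval_pi (Q : Measure Z) [IsProbabilityMeasure Q] {m : ℕ} (i : Fin m) :
    Measure.map (fun y : Fin m → Z => y i) (Measure.pi fun _ => Q) = Q := by
  ext s hs
  rw [Measure.map_apply (measurable_pi_apply i) hs, Set.eval_preimage, Measure.pi_pi]
  rw [Finset.prod_eq_single i (fun j _ hj => by rw [Function.update_of_ne hj]; simp)
    (fun h => absurd (Finset.mem_univ i) h)]
  rw [Function.update_self]

end MeasureLemmas


/-- Weighted conformal prediction with an arbitrary normalized weight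
function `ω̃` (with `∫ ω̃ dQ = 1`): letting `P̃` be the measure with density `ω̃` w.r.t. `Q`,
the coverage of the weighted split quantile is at least `1 - α - d_TV(P̃, P)`. -/
theorem weighted_conformal_coverage_imperfect_weights
    {Z : Type*} [MeasurableSpace Z] (Q P : Measure Z)
    [IsProbabilityMeasure Q] [IsProbabilityMeasure P]
    (w : Z → ℝ) (hwmeas : Measurable w) (hw0 : ∀ z, 0 ≤ w z)
    (hwint : ∫ z, w z ∂Q = 1)
    {Ω : Type*} [MeasurableSpace Ω] (μ : Measure Ω) [IsProbabilityMeasure μ]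
    (n : ℕ) (hn : 1 ≤ n) (Zi : Fin (n + 1) → Ω → Z) (hZmeas : ∀ i, Measurable (Zi i))
    (hindep : iIndepFun Zi μ)
    (hlawQ : ∀ i : Fin n, Measure.map (Zi i.castSucc) μ = Q)
    (hlawP : Measure.map (Zi (Fin.last n)) μ = P)
    (V : Z → ℝ) (hV : Measurable V) (α : ℝ) (hα : α ∈ Set.Ioo (0 : ℝ) 1) :
    1 - α - tvDist (Q.withDensity (fun z => ENNReal.ofReal (w z))) P ≤
      (μ {x | ((V (Zi (Fin.last n) x) : ℝ) : EReal) ≤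
        wQuantile (1 - α)
          (fun i : Fin (n + 1) => w (Zi i x) / ∑ j : Fin (n + 1), w (Zi j x))
          (fun i : Fin (n + 1) =>
            if (i : ℕ) < n then ((V (Zi i x) : ℝ) : EReal) else (⊤ : EReal))}).toReal := by
  obtain ⟨hα0, hα1⟩ := hα
  -- integrability of w
  have hwInt : Integrable w Q := by
    by_contra h
    rw [integral_undef h] at hwint; norm_num at hwint
  set Pt := Q.withDensity (fun z => ENNReal.ofReal (w z)) with hPt
  have hPtprob : IsProbabilityMeasure Pt := by
    constructor
    rw [hPt, withDensity_apply _ MeasurableSet.univ, Measure.restrict_univ,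
      ← ofReal_integral_eq_lintegral_ofReal hwInt (Filter.Eventually.of_forall hw0), hwint]
    simp
  set d := tvDist Pt P with hd
  have hd0 : 0 ≤ d := tvDist_nonneg _ _
  set N := Fin.last n with hN
  -- weight and score functions on the product space
  set pw : (Fin (n+1) → Z) → Fin (n+1) → ℝ :=
    fun y i => w (y i) / ∑ j, w (y j) with hpw
  set vS : (Fin (n+1) → Z) → Fin (n+1) → EReal :=
    fun y i => ((V (y i) : ℝ) : EReal) with hvS
  set vA : (Fin (n+1) → Z) → Fin (n+1) → EReal :=
    fun y i => if (i : ℕ) < n then ((V (y i) : ℝ) : EReal) else ⊤ with hvA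
  set qA : (Fin (n+1) → Z) → EReal := fun y => wQuantile (1 - α) (pw y) (vA y) with hqA
  set qS : (Fin (n+1) → Z) → EReal := fun y => wQuantile (1 - α) (pw y) (vS y) with hqS
  set E : Set (Fin (n+1) → Z) := {y | ((V (y N) : ℝ) : EReal) ≤ qA y} with hE
  -- measurability
  have hpw_meas : ∀ i, Measurable fun y : Fin (n+1) → Z => pw y i := fun i =>
    (hwmeas.comp (measurable_pi_apply i)).div
      (Finset.measurable_sum _ fun j _ => hwmeas.comp (measurable_pi_apply j))
  have hpw0 : ∀ (y : Fin (n+1) → Z) i, 0 ≤ pw y i := fun y i =>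
    div_nonneg (hw0 _) (Finset.sum_nonneg fun j _ => hw0 _)
  have hvS_meas : ∀ i, Measurable fun y : Fin (n+1) → Z => vS y i := fun i =>
    measurable_coe_real_ereal.comp (hV.comp (measurable_pi_apply i))
  have hqS_meas : Measurable qS := by
    refine measurable_wQuantile _ _ hpw_meas hpw0 fun i r => ?_
    exact measurableSet_le (hvS_meas i) measurable_const
  have hqA_meas : Measurable qA := by
    refine measurable_wQuantile _ _ hpw_meas hpw0 fun i r => ?_
    by_cases hi : (i : ℕ) < n
    · have : {y : Fin (n+1) → Z | vA y i ≤ (r : EReal)} = {y | vS y i ≤ (r : EReal)} := by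
        ext y; simp [hvA, hvS, hi]
      rw [this]; exact measurableSet_le (hvS_meas i) measurable_const
    · have : {y : Fin (n+1) → Z | vA y i ≤ (r : EReal)} = ∅ := by
        ext y; simp [hvA, hi]
      rw [this]; exact MeasurableSet.empty
  have hE_meas : MeasurableSet E :=
    measurableSet_le (hvS_meas N) hqA_meas
  -- Fact A : E is the same as the symmetric-quantile event
  have hEiff : ∀ y : Fin (n+1) → Z, (y ∈ E ↔ ((V (y N) : ℝ) : EReal) ≤ qS y) := by
    intro y
    refine factA (hpw0 y) N (V (y N)) rfl ?_ ?_
    · simp [hvA, hN]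
    · intro j hj
      have : (j : ℕ) < n := by
        rcases lt_or_eq_of_le (Nat.lt_succ_iff.1 j.isLt) with h | h
        · exact h
        · exact absurd (Fin.ext h : j = N) hj
      simp [hvA, hvS, this]
  -- the law of the sample vector
  set ν : Fin (n+1) → Measure Z := fun i => if i = N then P else Q with hν
  have hνprob : ∀ i, IsProbabilityMeasure (ν i) := by
    intro i; rw [hν]; dsimp only; split <;> infer_instance
  haveI := hνprob
  have hF_meas : Measurable (fun x (i : Fin (n+1)) => Zi i x) :=
    measurable_pi_lambda _ fun i => hZmeas i
  have hmap : Measure.map (fun x (i : Fin (n+1)) => Zi i x) μ = Measure.pi ν := by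
    refine (Measure.pi_eq fun s hs => ?_).symm
    rw [Measure.map_apply hF_meas (MeasurableSet.univ_pi hs)]
    have hpre : (fun x (i : Fin (n+1)) => Zi i x) ⁻¹' Set.pi Set.univ s
        = ⋂ i ∈ Finset.univ, Zi i ⁻¹' s i := by
      ext x; simp
    rw [hpre, hindep.measure_inter_preimage_eq_mul Finset.univ (fun i _ => hs i)]
    refine Finset.prod_congr rfl fun i _ => ?_
    rw [← Measure.map_apply (hZmeas i) (hs i)]
    simp only [hν]
    by_cases hi : i = N
    · subst hi; rw [if_pos rfl, hlawP]
    · rw [if_neg hi]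
      have hlt : (i : ℕ) < n := by
        rcases lt_or_eq_of_le (Nat.lt_succ_iff.1 i.isLt) with h | h
        · exact h
        · exact absurd (Fin.ext h : i = N) hi
      have hic : i = (⟨(i : ℕ), hlt⟩ : Fin n).castSucc := by
        apply Fin.ext; simp
      rw [hic, hlawQ]
  -- identify the event
  have hEvent : {x | ((V (Zi (Fin.last n) x) : ℝ) : EReal) ≤
        wQuantile (1 - α)
          (fun i : Fin (n + 1) => w (Zi i x) / ∑ j : Fin (n + 1), w (Zi j x))
          (fun i : Fin (n + 1) =>
            if (i : ℕ) < n then ((V (Zi i x) : ℝ) : EReal) else (⊤ : EReal))}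
      = (fun x (i : Fin (n+1)) => Zi i x) ⁻¹' E := by
    ext x
    simp only [Set.mem_setOf_eq, Set.mem_preimage, hE, hqA, hvA, hpw, hN]
  have hμE : μ {x | ((V (Zi (Fin.last n) x) : ℝ) : EReal) ≤
        wQuantile (1 - α)
          (fun i : Fin (n + 1) => w (Zi i x) / ∑ j : Fin (n + 1), w (Zi j x))
          (fun i : Fin (n + 1) =>
            if (i : ℕ) < n then ((V (Zi i x) : ℝ) : EReal) else (⊤ : EReal))}
      = Measure.pi ν E := by
    rw [hEvent, ← Measure.map_apply hF_meas hE_meas, hmap]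
  -- decomposition at coordinate N
  set R : Measure (Fin n → Z) := Measure.pi (fun _ => Q) with hR
  set e := MeasurableEquiv.piFinSuccAbove (fun _ : Fin (n+1) => Z) N with he
  have hprodν : (ν N).prod (Measure.pi fun j => ν (N.succAbove j)) = P.prod R := by
    rw [hν]; congr 1
    · simp
    · refine congrArg Measure.pi (funext fun j => ?_)
      dsimp only
      rw [hN, Fin.succAbove_last]
      exact if_neg (Fin.castSucc_lt_last j).ne
  have hmpP : MeasurePreserving e (Measure.pi ν) (P.prod R) :=
    hprodν ▸ measurePreserving_piFinSuccAbove ν N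
  have hmpQ : MeasurePreserving e (Measure.pi fun _ : Fin (n+1) => Q) (Q.prod R) :=
    measurePreserving_piFinSuccAbove (fun _ : Fin (n+1) => Q) N
  set S : Set (Z × (Fin n → Z)) := e.symm ⁻¹' E with hS
  have hS_meas : MeasurableSet S := e.symm.measurable hE_meas
  have heS : e ⁻¹' S = E := by
    rw [hS, ← Set.preimage_comp]
    simp
  have hpiE : Measure.pi ν E = (P.prod R) S := by
    rw [← hmpP.map_eq, Measure.map_apply e.measurable hS_meas, heS]
  -- TV step
  haveI : IsProbabilityMeasure Pt := hPtprob
  set g : Z → ℝ≥0∞ := fun z => R (Prod.mk z ⁻¹' S) with hg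
  have hg_meas : Measurable g := measurable_measure_prodMk_left hS_meas
  have hg1 : ∀ z, g z ≤ 1 := fun z => by
    rw [hg]
    exact (measure_mono (Set.subset_univ _)).trans (by simp)
  have hPS : (P.prod R) S = ∫⁻ z, g z ∂P := Measure.prod_apply hS_meas
  have hPtS : (Pt.prod R) S = ∫⁻ z, g z ∂Pt := Measure.prod_apply hS_meas
  have hTV : (Pt.prod R) S ≤ (P.prod R) S + ENNReal.ofReal d := by
    rw [hPS, hPtS]
    exact lintegral_le_lintegral_add_tvDist Pt P g hg_meas hg1
  -- core coverage bound for the ideal weighted measure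
  have hprodD : Pt.prod R = (Q.prod R).withDensity (fun p => ENNReal.ofReal (w p.1)) :=
    withDensity_prod_fst Q R _ hwmeas.ennreal_ofReal
  set G : Fin (n+1) → (Fin (n+1) → Z) → ℝ≥0∞ :=
    fun i y => if vS y i ≤ qS y then 0 else ENNReal.ofReal (w (y i)) with hG
  have hG_meas : ∀ i, Measurable (G i) := fun i =>
    Measurable.ite (measurableSet_le (hvS_meas i) hqS_meas) measurable_const
      ((hwmeas.comp (measurable_pi_apply i)).ennreal_ofReal)
  set Q' : Measure (Fin (n+1) → Z) := Measure.pi fun _ => Q with hQ'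
  have hnc : (Pt.prod R) Sᶜ = ∫⁻ y, G N y ∂Q' := by
    have hwp : Measurable fun p : Z × (Fin n → Z) => ENNReal.ofReal (w p.1) :=
      (hwmeas.comp measurable_fst).ennreal_ofReal
    rw [hprodD, withDensity_apply _ hS_meas.compl, ← hmpQ.map_eq,
      setLIntegral_map hS_meas.compl hwp e.measurable]
    have hpre : e ⁻¹' Sᶜ = Eᶜ := by rw [Set.preimage_compl, heS]
    rw [hpre, ← lintegral_indicator hE_meas.compl]
    refine lintegral_congr fun y => ?_
    have h1 : (e y).1 = y N := rfl
    rw [Set.indicator_apply, h1]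
    simp only [hG, hvS]
    by_cases hy : y ∈ E
    · rw [if_neg (by simpa using hy), if_pos ((hEiff y).1 hy)]
    · rw [if_pos (by simpa using hy), if_neg (fun hc => hy ((hEiff y).2 hc))]
  have hswap : ∀ i : Fin (n+1), ∫⁻ y, G N y ∂Q' = ∫⁻ y, G i y ∂Q' := by
    intro i
    set σ : Equiv.Perm (Fin (n+1)) := Equiv.swap i N with hσ
    have hmp := measurePreserving_comp_perm Q (m := n+1) σ
    conv_lhs => rw [hQ', ← hmp.map_eq]
    rw [lintegral_map (hG_meas N) hmp.measurable]
    refine lintegral_congr fun y => ?_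
    have hpwσ : pw (y ∘ σ) = (pw y) ∘ σ := by
      funext j
      rw [hpw]
      dsimp only [Function.comp]
      rw [Equiv.sum_comp σ (fun k => w (y k))]
    have hqSσ : qS (y ∘ σ) = qS y := by
      rw [hqS]
      dsimp only
      rw [hpwσ]
      exact wQuantile_perm (pw y) (vS y) σ
    have hσN : σ N = i := Equiv.swap_apply_right i N
    have hyσ : (y ∘ σ) N = y i := by simp [hσN]
    have hvSσ : vS (y ∘ σ) N = vS y i := by rw [hvS]; dsimp only; rw [hyσ]
    rw [hG]
    dsimp only
    rw [hqSσ, hvSσ, hyσ]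
  have hsum_le : ∀ y : Fin (n+1) → Z,
      (∑ i, G i y) ≤ ENNReal.ofReal α * ENNReal.ofReal (∑ j, w (y j)) := by
    intro y
    have h1 : (∑ i, G i y) = ENNReal.ofReal
        (∑ i ∈ Finset.univ.filter (fun i => ¬ vS y i ≤ qS y), w (y i)) := by
      rw [Finset.sum_filter, ENNReal.ofReal_sum_of_nonneg (fun i _ => by split <;> simp [hw0])]
      refine Finset.sum_congr rfl fun i _ => ?_
      by_cases hc : vS y i ≤ qS y <;> simp [hG, hc]
    rw [h1, ← ENNReal.ofReal_mul hα0.le]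
    apply ENNReal.ofReal_le_ofReal
    exact factB hα0 hα1 (fun i => w (y i)) (fun i => hw0 _) (fun i => V (y i))
  have hWint1 : ∀ j : Fin (n+1), ∫⁻ y, ENNReal.ofReal (w (y j)) ∂Q' = 1 := by
    intro j
    calc ∫⁻ y, ENNReal.ofReal (w (y j)) ∂Q'
        = ∫⁻ z, ENNReal.ofReal (w z) ∂(Measure.map (fun y : Fin (n+1) → Z => y j) Q') := by
          rw [lintegral_map hwmeas.ennreal_ofReal (measurable_pi_apply j)]
      _ = ∫⁻ z, ENNReal.ofReal (w z) ∂Q := by rw [hQ', map_eval_pi]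
      _ = 1 := by
          rw [← ofReal_integral_eq_lintegral_ofReal hwInt (Filter.Eventually.of_forall hw0),
            hwint]
          simp
  have htot : ∫⁻ y, ENNReal.ofReal (∑ j, w (y j)) ∂Q' = ((n+1 : ℕ) : ℝ≥0∞) := by
    have h0 : ∀ y : Fin (n+1) → Z, ENNReal.ofReal (∑ j, w (y j))
        = ∑ j, ENNReal.ofReal (w (y j)) :=
      fun y => ENNReal.ofReal_sum_of_nonneg (fun i _ => hw0 _)
    simp_rw [h0]
    have hmj : ∀ j : Fin (n+1), Measurable fun y : Fin (n+1) → Z => ENNReal.ofReal (w (y j)) :=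
      fun j => (hwmeas.comp (measurable_pi_apply j)).ennreal_ofReal
    rw [lintegral_finset_sum _ (fun j _ => hmj j)]
    simp [hWint1]
  have hnc_le : (Pt.prod R) Sᶜ ≤ ENNReal.ofReal α := by
    have hcard : ((n+1 : ℕ) : ℝ≥0∞) * ((Pt.prod R) Sᶜ)
        ≤ ((n+1 : ℕ) : ℝ≥0∞) * ENNReal.ofReal α := by
      calc ((n+1:ℕ) : ℝ≥0∞) * ((Pt.prod R) Sᶜ)
          = ∑ _i : Fin (n+1), ∫⁻ y, G N y ∂Q' := by
            rw [hnc, Finset.sum_const, Finset.card_univ, Fintype.card_fin, nsmul_eq_mul]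
        _ = ∑ i : Fin (n+1), ∫⁻ y, G i y ∂Q' :=
            Finset.sum_congr rfl (fun i _ => hswap i)
        _ = ∫⁻ y, ∑ i, G i y ∂Q' := (lintegral_finset_sum _ (fun i _ => hG_meas i)).symm
        _ ≤ ∫⁻ y, ENNReal.ofReal α * ENNReal.ofReal (∑ j, w (y j)) ∂Q' :=
            lintegral_mono hsum_le
        _ = ENNReal.ofReal α * ((n+1:ℕ) : ℝ≥0∞) := by
            have hmsum : Measurable fun y : Fin (n+1) → Z => ENNReal.ofReal (∑ j, w (y j)) :=
              (Finset.measurable_sum _ fun j _ =>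
                hwmeas.comp (measurable_pi_apply j)).ennreal_ofReal
            rw [lintegral_const_mul _ hmsum, htot]
        _ = ((n+1:ℕ) : ℝ≥0∞) * ENNReal.ofReal α := mul_comm _ _
    exact (ENNReal.mul_le_mul_iff_right (by exact_mod_cast Nat.succ_ne_zero n)
      (ENNReal.natCast_ne_top _)).1 hcard
  have hPtS_ge : ENNReal.ofReal (1 - α) ≤ (Pt.prod R) S := by
    have hadd : (Pt.prod R) S + (Pt.prod R) Sᶜ = 1 := by
      rw [measure_add_measure_compl hS_meas]
      simp
    have h1 : ENNReal.ofReal (1 - α) = 1 - ENNReal.ofReal α := by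
      rw [ENNReal.ofReal_sub _ hα0.le, ENNReal.ofReal_one]
    rw [h1, tsub_le_iff_right]
    calc (1 : ℝ≥0∞) = (Pt.prod R) S + (Pt.prod R) Sᶜ := hadd.symm
      _ ≤ (Pt.prod R) S + ENNReal.ofReal α := add_le_add le_rfl hnc_le
  have hfinal : ENNReal.ofReal (1 - α - d) ≤ (P.prod R) S := by
    have h1 : ENNReal.ofReal (1 - α) ≤ (P.prod R) S + ENNReal.ofReal d := hPtS_ge.trans hTV
    calc ENNReal.ofReal (1 - α - d)
        = ENNReal.ofReal (1 - α) - ENNReal.ofReal d := ENNReal.ofReal_sub _ hd0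
      _ ≤ (P.prod R) S := tsub_le_iff_right.2 h1
  rw [hμE, hpiE]
  rcases le_or_gt (1 - α - d) 0 with hle | hlt
  · exact hle.trans ENNReal.toReal_nonneg
  · have h2 := ENNReal.toReal_mono (measure_ne_top _ _) hfinal
    rwa [ENNReal.toReal_ofReal hlt.le] at h2
end

section
/- Let (Z, 𝒵) be a measurable space, let Q and P be probability measures on Z, let ω̃ : Z → [0,∞) be measurable with ∫ ω̃ dQ = 1, and let P̃ be the probability measure with density ω̃ with respect to Q. Define the balanced classification problem between P (label 1) and P̃ (label 0): let Π := (1/2)(P ⊗ δ_1) + (1/2)(P̃ ⊗ δ_0) on Z × {0,1}, and let R* := inf over measurable classifiers g : Z → {0,1} of Π({(z,k) : g(z) ≠ k}). On a common probability space, let Z^1, …, Z^n be i.i.d. with law Q and let Z^{n+1} have law P, with Z^1, …, Z^{n+1} mutually independent; let V : Z → ℝ be measurable and α ∈ (0,1); define the weights p_i := ω̃(Z^i) / (Σ_{j=1}^n ω̃(Z^j) + ω̃(Z^{n+1})) for i = 1, …, n+1 (with the convention that the weighted quantile below is +∞ when the denominator is 0). Then P( V(Z^{n+1}) ≤ Quantile_{1−α}(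 Σ_{i=1}^n p_i δ_{V(Z^i)} + p_{n+1} δ_{+∞} ) ) ≥ 1 − α − (1 − 2·R*). -/
open MeasureTheory ProbabilityTheory
open scoped ENNReal

universe u

set_option linter.unusedSectionVars false
set_option linter.unusedVariables false
set_option maxHeartbeats 1000000

lemma wq_sum_mono {ι : Type*} [Fintype ι] {p : ι → ℝ} (hp : ∀ i, 0 ≤ p i)
    {v : ι → EReal} {r r' : ℝ} (h : r ≤ r') :
    ∑ i ∈ Finset.univ.filter (fun i => v i ≤ (r : EReal)), p i ≤
      ∑ i ∈ Finset.univ.filter (fun i => v i ≤ (r' : EReal)), p i := by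
  refine Finset.sum_le_sum_of_subset_of_nonneg ?_ (fun i _ _ => hp i)
  intro i hi
  simp only [Finset.mem_filter, Finset.mem_univ, true_and] at hi ⊢
  exact hi.trans (EReal.coe_le_coe_iff.mpr h)

lemma le_wQuantile_iff {ι : Type*} [Fintype ι] {β t : ℝ} {p : ι → ℝ} (hp : ∀ i, 0 ≤ p i)
    {v : ι → EReal} :
    ((t : ℝ) : EReal) ≤ wQuantile β p v ↔
      ∀ q : ℚ, β ≤ ∑ i ∈ Finset.univ.filter (fun i => v i ≤ ((q : ℝ) : EReal)), p i →
        t ≤ (q : ℝ) := by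
  constructor
  · intro h q hq
    have hmem : ((q : ℝ) : EReal) ∈ {z : EReal | ∃ r : ℝ, z = (r : EReal) ∧
        β ≤ ∑ i ∈ Finset.univ.filter (fun i => v i ≤ (r : EReal)), p i} := ⟨q, rfl, hq⟩
    have := h.trans (sInf_le hmem)
    exact_mod_cast this
  · intro h
    refine le_sInf ?_
    rintro b ⟨r, rfl, hr⟩
    by_contra hclt
    push_neg at hclt
    have hrt : r < t := by exact_mod_cast hclt
    obtain ⟨q, hq1, hq2⟩ := exists_rat_btwn hrt
    have hβ : β ≤ ∑ i ∈ Finset.univ.filter (fun i => v i ≤ ((q : ℝ) : EReal)), p i :=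
      hr.trans (wq_sum_mono hp hq1.le)
    exact absurd (h q hβ) (not_le.mpr hq2)

lemma exists_of_not_le_wQuantile {ι : Type*} [Fintype ι] {β t : ℝ} {p : ι → ℝ} {v : ι → EReal}
    (h : ¬ ((t : ℝ) : EReal) ≤ wQuantile β p v) :
    ∃ r : ℝ, r < t ∧ β ≤ ∑ i ∈ Finset.univ.filter (fun i => v i ≤ ((r : ℝ) : EReal)), p i := by
  rw [not_le] at h
  obtain ⟨b, hb, hblt⟩ := sInf_lt_iff.mp h
  obtain ⟨r, rfl, hr⟩ := hb
  exact ⟨r, by exact_mod_cast hblt, hr⟩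

lemma hahn_toReal {Z : Type*} [MeasurableSpace Z] (P P' : Measure Z)
    [IsFiniteMeasure P] [IsFiniteMeasure P'] :
    ∃ A : Set Z, MeasurableSet A ∧ 0 ≤ (P' Aᶜ).toReal - (P Aᶜ).toReal ∧
      ∀ B : Set Z, MeasurableSet B →
        (P' B).toReal ≤ (P B).toReal + ((P' Aᶜ).toReal - (P Aᶜ).toReal) := by
  set s : SignedMeasure Z := P.toSignedMeasure - P'.toSignedMeasure with hs
  obtain ⟨A, hA, hpos, hneg⟩ := s.exists_compl_positive_negative
  have hsapp : ∀ B : Set Z, MeasurableSet B → s B = (P B).toReal - (P' B).toReal := by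
    intro B hB
    simp [hs, Measure.toSignedMeasure_apply, hB, measureReal_def]
  have hposB : ∀ B : Set Z, MeasurableSet B → B ⊆ A → (P' B).toReal ≤ (P B).toReal := by
    intro B hB hBA
    have h1 := (VectorMeasure.restrict_le_restrict_iff 0 s hA).mp hpos hB hBA
    simp only [VectorMeasure.zero_apply] at h1
    linarith [hsapp B hB]
  have hnegB : ∀ B : Set Z, MeasurableSet B → B ⊆ Aᶜ → (P B).toReal ≤ (P' B).toReal := by
    intro B hB hBA
    have h1 := (VectorMeasure.restrict_le_restrict_iff s 0 hA.compl).mp hneg hB hBA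
    simp only [VectorMeasure.zero_apply] at h1
    linarith [hsapp B hB]
  refine ⟨A, hA, by linarith [hnegB Aᶜ hA.compl subset_rfl], ?_⟩
  intro B hB
  have hsplit : ∀ (ρ : Measure Z) [IsFiniteMeasure ρ],
      (ρ B).toReal = (ρ (B ∩ A)).toReal + (ρ (B ∩ Aᶜ)).toReal := by
    intro ρ _
    rw [← measure_inter_add_diff B hA, ENNReal.toReal_add (measure_ne_top _ _)
      (measure_ne_top _ _), Set.diff_eq]
  have hsplitc : ∀ (ρ : Measure Z) [IsFiniteMeasure ρ],
      (ρ Aᶜ).toReal = (ρ (B ∩ Aᶜ)).toReal + (ρ (Aᶜ \ B)).toReal := by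
    intro ρ _
    rw [← measure_inter_add_diff Aᶜ hB, ENNReal.toReal_add (measure_ne_top _ _)
      (measure_ne_top _ _), Set.inter_comm]
  have h1 := hposB (B ∩ A) (hB.inter hA) Set.inter_subset_right
  have h2 := hnegB (Aᶜ \ B) (hA.compl.diff hB) Set.diff_subset
  have e1 := hsplit P; have e2 := hsplit P'
  have e3 := hsplitc P; have e4 := hsplitc P'
  linarith

section Aux
variable {Z : Type*} [MeasurableSpace Z]

noncomputable def covEvent (w V : Z → ℝ) (α : ℝ) (n : ℕ) : Set (Fin (n+1) → Z) :=
  {z | ((V (z (Fin.last n)) : ℝ) : EReal) ≤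
    wQuantile (1 - α) (fun i => w (z i) / ∑ j, w (z j))
      (fun i => if (i : ℕ) < n then ((V (z i) : ℝ) : EReal) else ⊤)}

lemma covEvent_eq (w V : Z → ℝ) (α : ℝ) (n : ℕ) (hw0 : ∀ z, 0 ≤ w z) :
    covEvent w V α n =
      ⋂ q : ℚ, ({z : Fin (n+1) → Z | 1 - α ≤ ∑ i ∈ Finset.univ.filter (fun i : Fin (n+1) =>
          (if (i : ℕ) < n then ((V (z i) : ℝ) : EReal) else ⊤) ≤ ((q : ℝ) : EReal)),
            w (z i) / ∑ j, w (z j)}ᶜ ∪ {z | V (z (Fin.last n)) ≤ (q : ℝ)}) := by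
  ext z
  have hp : ∀ i : Fin (n+1), 0 ≤ w (z i) / ∑ j, w (z j) :=
    fun i => div_nonneg (hw0 _) (Finset.sum_nonneg fun j _ => hw0 _)
  simp only [covEvent, Set.mem_setOf_eq, le_wQuantile_iff hp, Set.mem_iInter, Set.mem_union,
    Set.mem_compl_iff, Set.mem_setOf_eq]
  refine forall_congr' fun q => ?_
  rw [or_iff_not_imp_left, not_not]

lemma covEvent_measurable (w V : Z → ℝ) (hw : Measurable w) (hV : Measurable V)
    (α : ℝ) (n : ℕ) (hw0 : ∀ z, 0 ≤ w z) : MeasurableSet (covEvent w V α n) := by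
  rw [covEvent_eq w V α n hw0]
  refine MeasurableSet.iInter fun q => (MeasurableSet.union ?_ ?_)
  · refine MeasurableSet.compl ?_
    have hmeas : MeasurableSet {z : Fin (n+1) → Z | 1 - α ≤ ∑ i : Fin (n+1),
        if (if (i : ℕ) < n then ((V (z i) : ℝ) : EReal) else ⊤) ≤ ((q : ℝ) : EReal)
        then w (z i) / ∑ j, w (z j) else 0} := by
      refine measurableSet_le measurable_const ?_
      refine Finset.measurable_sum _ fun i _ => ?_
      have hbase : Measurable fun z : Fin (n+1) → Z => w (z i) / ∑ j, w (z j) :=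
        (hw.comp (measurable_pi_apply i)).div
          (Finset.measurable_sum _ fun j _ => hw.comp (measurable_pi_apply j))
      by_cases hi : (i : ℕ) < n
      · simp only [hi, if_true]
        refine Measurable.ite ?_ hbase measurable_const
        have hEq : {z : Fin (n+1) → Z | ((V (z i) : ℝ) : EReal) ≤ ((q : ℝ) : EReal)} =
            {z | V (z i) ≤ (q : ℝ)} := by
          ext z; exact EReal.coe_le_coe_iff
        rw [hEq]
        exact measurableSet_le (hV.comp (measurable_pi_apply i)) measurable_const
      · simp only [hi, if_false]
        have h2 : (fun z : Fin (n+1) → Z =>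
            if (⊤ : EReal) ≤ ((q : ℝ) : EReal) then w (z i) / ∑ j, w (z j) else 0) =
            fun _ => 0 := by
          funext z
          rw [if_neg (fun h => (EReal.coe_lt_top (q : ℝ)).not_ge h)]
        rw [h2]
        exact measurable_const
    have hset : {z : Fin (n+1) → Z | 1 - α ≤ ∑ i ∈ Finset.univ.filter (fun i : Fin (n+1) =>
          (if (i : ℕ) < n then ((V (z i) : ℝ) : EReal) else ⊤) ≤ ((q : ℝ) : EReal)),
            w (z i) / ∑ j, w (z j)} = {z : Fin (n+1) → Z | 1 - α ≤ ∑ i : Fin (n+1),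
        if (if (i : ℕ) < n then ((V (z i) : ℝ) : EReal) else ⊤) ≤ ((q : ℝ) : EReal)
        then w (z i) / ∑ j, w (z j) else 0} := by
      ext z
      rw [Set.mem_setOf_eq, Set.mem_setOf_eq, Finset.sum_filter]
    rw [hset]
    exact hmeas
  · exact measurableSet_le (hV.comp (measurable_pi_apply _)) measurable_const

/-- level sets for the symmetrization argument -/
def Acal (w V : Z → ℝ) (α : ℝ) (n : ℕ) (k : Fin (n+1)) : Set (Fin (n+1) → Z) :=
  {z | (1 - α) * (∑ j, w (z j)) ≤
    ∑ j ∈ Finset.univ.filter (fun j => V (z j) < V (z k)), w (z j)}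

lemma Acal_measurable (w V : Z → ℝ) (hw : Measurable w) (hV : Measurable V)
    (α : ℝ) (n : ℕ) (k : Fin (n+1)) : MeasurableSet (Acal w V α n k) := by
  refine measurableSet_le (measurable_const.mul
    (Finset.measurable_sum _ fun j _ => hw.comp (measurable_pi_apply j))) ?_
  have h : (fun z : Fin (n+1) → Z =>
      ∑ j ∈ Finset.univ.filter (fun j => V (z j) < V (z k)), w (z j)) =
      fun z => ∑ j : Fin (n+1), if V (z j) < V (z k) then w (z j) else 0 := by
    ext z; rw [Finset.sum_filter]
  rw [h]
  refine Finset.measurable_sum _ fun j _ => Measurable.ite ?_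
    (hw.comp (measurable_pi_apply j)) measurable_const
  exact measurableSet_lt (hV.comp (measurable_pi_apply j)) (hV.comp (measurable_pi_apply k))

/-- miscoverage implies the level-set event at the last index -/
lemma compl_covEvent_subset (w V : Z → ℝ) (α : ℝ) (hα : α ∈ Set.Ioo (0:ℝ) 1) (n : ℕ)
    (hw0 : ∀ z, 0 ≤ w z) :
    (covEvent w V α n)ᶜ ⊆ Acal w V α n (Fin.last n) := by
  intro z hz
  simp only [Set.mem_compl_iff, covEvent, Set.mem_setOf_eq] at hz
  obtain ⟨r, hrt, hr⟩ := exists_of_not_le_wQuantile hz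
  set s := ∑ j, w (z j) with hs
  have hs0 : 0 ≤ s := Finset.sum_nonneg fun j _ => hw0 _
  have hspos : 0 < s := by
    rcases hs0.lt_or_eq with h | h
    · exact h
    · exfalso
      have hz0 : ∀ i ∈ Finset.univ.filter (fun i : Fin (n+1) =>
          (if (i : ℕ) < n then ((V (z i) : ℝ) : EReal) else ⊤) ≤ ((r : ℝ) : EReal)),
          w (z i) / s = 0 := fun i _ => by rw [← h, div_zero]
      rw [Finset.sum_congr rfl hz0, Finset.sum_const_zero] at hr
      linarith [hα.2]
  rw [← Finset.sum_div, le_div_iff₀ hspos] at hr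
  have hsum : (1 - α) * s ≤ ∑ i ∈ Finset.univ.filter (fun i : Fin (n+1) =>
      (if (i : ℕ) < n then ((V (z i) : ℝ) : EReal) else ⊤) ≤ ((r : ℝ) : EReal)), w (z i) := by
    calc (1 - α) * s = (1 - α) * s := rfl
      _ ≤ _ := by linarith [hr]
  refine le_trans hsum ?_
  refine Finset.sum_le_sum_of_subset_of_nonneg ?_ (fun i _ _ => hw0 _)
  intro i hi
  simp only [Finset.mem_filter, Finset.mem_univ, true_and] at hi ⊢
  by_cases hin : (i : ℕ) < n
  · rw [if_pos hin] at hi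
    exact (EReal.coe_le_coe_iff.mp hi).trans_lt hrt
  · rw [if_neg hin] at hi
    exact absurd hi (EReal.coe_lt_top (r : ℝ)).not_ge

/-- the key counting bound -/
lemma sum_indicator_Acal_le (w V : Z → ℝ) (α : ℝ) (hα : α ∈ Set.Ioo (0:ℝ) 1) (n : ℕ)
    (hw0 : ∀ z, 0 ≤ w z) (z : Fin (n+1) → Z) :
    ∑ k : Fin (n+1), (Acal w V α n k).indicator (fun z => w (z k)) z ≤
      α * ∑ j, w (z j) := by
  classical
  set s := ∑ j, w (z j) with hs
  have hs0 : 0 ≤ s := Finset.sum_nonneg fun j _ => hw0 _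
  have hind : ∀ k : Fin (n+1), (Acal w V α n k).indicator (fun z => w (z k)) z =
      if z ∈ Acal w V α n k then w (z k) else 0 := fun k => rfl
  rw [Finset.sum_congr rfl fun k _ => hind k, ← Finset.sum_filter]
  set K := Finset.univ.filter (fun k => z ∈ Acal w V α n k) with hK
  rcases K.eq_empty_or_nonempty with h | h
  · rw [h, Finset.sum_empty]
    exact mul_nonneg hα.1.le hs0
  · obtain ⟨k₀, hk₀K, hk₀min⟩ := K.exists_min_image (fun k => V (z k)) h
    have hsub : K ⊆ Finset.univ.filter (fun j => ¬ V (z j) < V (z k₀)) := by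
      intro k hk
      simp only [Finset.mem_filter, Finset.mem_univ, true_and]
      exact not_lt.mpr (hk₀min k hk)
    have h1 : ∑ k ∈ K, w (z k) ≤
        ∑ k ∈ Finset.univ.filter (fun j => ¬ V (z j) < V (z k₀)), w (z k) :=
      Finset.sum_le_sum_of_subset_of_nonneg hsub (fun i _ _ => hw0 _)
    have h2 : ∑ k ∈ Finset.univ.filter (fun j => V (z j) < V (z k₀)), w (z k) +
        ∑ k ∈ Finset.univ.filter (fun j => ¬ V (z j) < V (z k₀)), w (z k) = s :=
      Finset.sum_filter_add_sum_filter_not _ _ _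
    have h3 : (1 - α) * s ≤
        ∑ k ∈ Finset.univ.filter (fun j => V (z j) < V (z k₀)), w (z k) := by
      have hmem := (Finset.mem_filter.mp hk₀K).2
      exact hmem
    linarith

variable (Q : Measure Z) [IsProbabilityMeasure Q]

lemma withDensity_prob (W : Z → ℝ≥0∞) (hW : Measurable W) (hWint : ∫⁻ z, W z ∂Q = 1) :
    IsProbabilityMeasure (Q.withDensity W) :=
  ⟨by rw [withDensity_apply _ MeasurableSet.univ, setLIntegral_univ]; exact hWint⟩

lemma pi_withDensity_last (W : Z → ℝ≥0∞) (hW : Measurable W) (hWint : ∫⁻ z, W z ∂Q = 1)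
    (n : ℕ) :
    Measure.pi (fun i : Fin (n+1) => if i = Fin.last n then Q.withDensity W else Q) =
      (Measure.pi fun _ : Fin (n+1) => Q).withDensity (fun z => W (z (Fin.last n))) := by
  haveI hPprob : IsProbabilityMeasure (Q.withDensity W) := withDensity_prob Q W hW hWint
  haveI : ∀ i : Fin (n+1),
      SigmaFinite ((fun i : Fin (n+1) => if i = Fin.last n then Q.withDensity W else Q) i) := by
    intro i
    by_cases h : i = Fin.last n <;> simp only [h, if_true, if_false] <;> infer_instance
  refine Measure.pi_eq fun s hs => ?_
  have hbox : MeasurableSet (Set.pi Set.univ s) := MeasurableSet.univ_pi hs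
  rw [withDensity_apply _ hbox, ← lintegral_indicator hbox]
  set φ := MeasurableEquiv.piFinSuccAbove (fun _ : Fin (n+1) => Z) (Fin.last n) with hφ
  have hmp := measurePreserving_piFinSuccAbove (fun _ : Fin (n+1) => Q) (Fin.last n)
  set g : Z × (Fin n → Z) → ℝ≥0∞ := fun p =>
    ((s (Fin.last n)).indicator W p.1) *
      ((Set.pi Set.univ fun j => s ((Fin.last n).succAbove j)).indicator 1 p.2) with hg
  have hgmeas : Measurable g := by
    exact ((hW.indicator (hs _)).comp measurable_fst).mul
      ((measurable_one.indicator (MeasurableSet.univ_pi fun j => hs _)).comp measurable_snd)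
  have hcomp : (Set.pi Set.univ s).indicator (fun z => W (z (Fin.last n))) = fun z => g (φ z) := by
    funext z
    have hφz : φ z = (z (Fin.last n), fun j => z ((Fin.last n).succAbove j)) := rfl
    rw [hφz]
    by_cases h : z ∈ Set.pi Set.univ s
    · rw [Set.indicator_of_mem h]
      have h' := (Set.mem_univ_pi).mp h
      rw [hg]
      simp only
      rw [Set.indicator_of_mem (h' _), Set.indicator_of_mem (by
        exact Set.mem_univ_pi.mpr fun j => h' _), Pi.one_apply, mul_one]
    · rw [Set.indicator_of_notMem h, hg]
      simp only
      have hx : ¬ (z (Fin.last n) ∈ s (Fin.last n) ∧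
          ∀ j, z ((Fin.last n).succAbove j) ∈ s ((Fin.last n).succAbove j)) := by
        intro hx
        exact h (Set.mem_univ_pi.mpr ((Fin.forall_iff_succAbove (Fin.last n)).mpr hx))
      rw [not_and_or] at hx
      rcases hx with hx | hx
      · rw [Set.indicator_of_notMem hx, zero_mul]
      · push_neg at hx
        obtain ⟨j, hj⟩ := hx
        have hnm : (fun j => z ((Fin.last n).succAbove j)) ∉
            Set.pi Set.univ fun j => s ((Fin.last n).succAbove j) := by
          rw [Set.mem_univ_pi]; push_neg; exact ⟨j, hj⟩
        rw [Set.indicator_of_notMem hnm, mul_zero]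
  rw [hcomp, hmp.lintegral_comp hgmeas]
  rw [hg]
  simp only
  rw [lintegral_prod_mul ((hW.indicator (hs _)).aemeasurable)
    ((measurable_one.indicator (MeasurableSet.univ_pi fun j => hs _)).aemeasurable)]
  rw [lintegral_indicator (hs _) _, lintegral_indicator_one (MeasurableSet.univ_pi fun j => hs _)]
  rw [Measure.pi_pi]
  rw [Fin.prod_univ_succAbove (fun i => (if i = Fin.last n then Q.withDensity W else Q) (s i))
    (Fin.last n)]
  simp only [if_true]
  congr 1
  · rw [withDensity_apply _ (hs _)]
  · refine Finset.prod_congr rfl fun j _ => ?_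
    rw [if_neg]
    · rw [Fin.succAbove_last]
      exact (Fin.castSucc_lt_last j).ne

lemma lintegral_comp_perm (n : ℕ) (e : Equiv.Perm (Fin (n+1)))
    (f : (Fin (n+1) → Z) → ℝ≥0∞) (hf : Measurable f) :
    ∫⁻ z, f (z ∘ e) ∂(Measure.pi fun _ : Fin (n+1) => Q) =
      ∫⁻ z, f z ∂(Measure.pi fun _ : Fin (n+1) => Q) := by
  have hmp := measurePreserving_piCongrLeft (fun _ : Fin (n+1) => Q) e.symm
  have hΦ : ∀ z : Fin (n+1) → Z,
      (MeasurableEquiv.piCongrLeft (fun _ : Fin (n+1) => Z) e.symm) z = z ∘ e := by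
    intro z
    funext i
    have h := Equiv.piCongrLeft_apply_apply (fun _ : Fin (n+1) => Z) e.symm z (e i)
    rw [Equiv.symm_apply_apply] at h
    exact h
  have := hmp.lintegral_comp hf
  calc ∫⁻ z, f (z ∘ e) ∂(Measure.pi fun _ : Fin (n+1) => Q)
      = ∫⁻ z, f ((MeasurableEquiv.piCongrLeft (fun _ : Fin (n+1) => Z) e.symm) z)
          ∂(Measure.pi fun _ : Fin (n+1) => Q) := by
        refine lintegral_congr fun z => ?_
        rw [hΦ z]
    _ = ∫⁻ z, f z ∂(Measure.pi fun _ : Fin (n+1) => Q) := this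

lemma lintegral_eval_pi (n : ℕ) (k : Fin (n+1)) (g : Z → ℝ≥0∞) (hg : Measurable g) :
    ∫⁻ z, g (z k) ∂(Measure.pi fun _ : Fin (n+1) => Q) = ∫⁻ x, g x ∂Q := by
  have hmp := measurePreserving_piFinSuccAbove (fun _ : Fin (n+1) => Q) k
  have h1 : ∀ z : Fin (n+1) → Z,
      g (z k) = (fun p : Z × (Fin n → Z) => g p.1)
        ((MeasurableEquiv.piFinSuccAbove (fun _ : Fin (n+1) => Z) k) z) := fun z => rfl
  calc ∫⁻ z, g (z k) ∂(Measure.pi fun _ : Fin (n+1) => Q)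
      = ∫⁻ z, (fun p : Z × (Fin n → Z) => g p.1)
          ((MeasurableEquiv.piFinSuccAbove (fun _ : Fin (n+1) => Z) k) z)
          ∂(Measure.pi fun _ : Fin (n+1) => Q) := lintegral_congr fun z => rfl
    _ = ∫⁻ p, g p.1 ∂(Q.prod (Measure.pi fun _ : Fin n => Q)) := by
        exact hmp.lintegral_comp (hg.comp measurable_fst)
    _ = ∫⁻ x, g x ∂Q := by
        have := lintegral_prod_mul (μ := Q) (ν := Measure.pi fun _ : Fin n => Q)
          hg.aemeasurable (aemeasurable_const (b := (1 : ℝ≥0∞)))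
        simp only [mul_one, lintegral_const, measure_univ, one_mul] at this
        exact this

lemma core_coverage (w V : Z → ℝ) (hw : Measurable w) (hV : Measurable V)
    (hw0 : ∀ z, 0 ≤ w z) (hwint : ∫⁻ z, ENNReal.ofReal (w z) ∂Q = 1)
    (α : ℝ) (hα : α ∈ Set.Ioo (0:ℝ) 1) (n : ℕ) :
    ENNReal.ofReal (1 - α) ≤
      Measure.pi (fun i : Fin (n+1) => if i = Fin.last n then
        Q.withDensity (fun z => ENNReal.ofReal (w z)) else Q) (covEvent w V α n) := by
  set W : Z → ℝ≥0∞ := fun z => ENNReal.ofReal (w z) with hWdef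
  have hW : Measurable W := hw.ennreal_ofReal
  set π : Measure (Fin (n+1) → Z) := Measure.pi (fun _ : Fin (n+1) => Q) with hπ
  set ν : Measure (Fin (n+1) → Z) :=
    Measure.pi (fun i : Fin (n+1) => if i = Fin.last n then Q.withDensity W else Q) with hν
  have hpi := pi_withDensity_last Q W hW hwint n
  have hE := covEvent_measurable w V hw hV α n hw0
  -- the indicator functions
  set h : Fin (n+1) → (Fin (n+1) → Z) → ℝ≥0∞ :=
    fun k z => (Acal w V α n k).indicator (fun z => W (z k)) z with hh
  have hhmeas : ∀ k, Measurable (h k) := fun k =>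
    (hW.comp (measurable_pi_apply k)).indicator (Acal_measurable w V hw hV α n k)
  -- ν of a measurable set B equals ∫⁻ indicator * W(z last)
  have hνapp : ∀ B : Set (Fin (n+1) → Z), MeasurableSet B →
      ν B = ∫⁻ z, B.indicator (fun z => W (z (Fin.last n))) z ∂π := by
    intro B hB
    rw [hν, hpi, withDensity_apply _ hB, lintegral_indicator hB]
  -- miscoverage bound by h last
  have hmis : ν (covEvent w V α n)ᶜ ≤ ∫⁻ z, h (Fin.last n) z ∂π := by
    rw [hνapp _ hE.compl]
    have hsub := compl_covEvent_subset w V α hα n hw0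
    have hle : ∀ z, (covEvent w V α n)ᶜ.indicator (fun z => W (z (Fin.last n))) z ≤
        h (Fin.last n) z := by
      intro z
      by_cases hz : z ∈ (covEvent w V α n)ᶜ
      · rw [Set.indicator_of_mem hz]
        have hrfl : h (Fin.last n) z =
            (Acal w V α n (Fin.last n)).indicator (fun z => W (z (Fin.last n))) z := rfl
        rw [hrfl, Set.indicator_of_mem (hsub hz)]
      · rw [Set.indicator_of_notMem hz]
        exact zero_le
    exact lintegral_mono hle
  -- symmetry
  have hsym : ∀ k : Fin (n+1), ∫⁻ z, h k z ∂π = ∫⁻ z, h (Fin.last n) z ∂π := by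
    intro k
    set e : Equiv.Perm (Fin (n+1)) := Equiv.swap k (Fin.last n) with he
    have hcomp : ∀ z : Fin (n+1) → Z, h k (z ∘ e) = h (Fin.last n) z := by
      intro z
      have hek : e k = Fin.last n := Equiv.swap_apply_left _ _
      have hsum1 : ∑ j, w ((z ∘ e) j) = ∑ j, w (z j) :=
        Equiv.sum_comp e (fun j => w (z j))
      have hsum2 : ∑ j ∈ Finset.univ.filter (fun j => V ((z ∘ e) j) < V ((z ∘ e) k)),
          w ((z ∘ e) j) =
          ∑ j ∈ Finset.univ.filter (fun j => V (z j) < V (z (Fin.last n))), w (z j) := by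
        refine Finset.sum_equiv e ?_ ?_
        · intro i
          simp only [Finset.mem_filter, Finset.mem_univ, true_and, Function.comp_apply, hek]
        · intro i _
          rfl
      have hmem : (z ∘ e) ∈ Acal w V α n k ↔ z ∈ Acal w V α n (Fin.last n) := by
        simp only [Acal, Set.mem_setOf_eq, hsum1, hsum2]
      have hval : W ((z ∘ e) k) = W (z (Fin.last n)) := by
        rw [Function.comp_apply, hek]
      by_cases hz : z ∈ Acal w V α n (Fin.last n)
      · rw [hh]
        simp only
        rw [Set.indicator_of_mem (hmem.mpr hz), Set.indicator_of_mem hz, hval]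
      · rw [hh]
        simp only
        rw [Set.indicator_of_notMem (fun hc => hz (hmem.mp hc)), Set.indicator_of_notMem hz]
    calc ∫⁻ z, h k z ∂π = ∫⁻ z, h k (z ∘ e) ∂π := (lintegral_comp_perm Q n e _ (hhmeas k)).symm
      _ = ∫⁻ z, h (Fin.last n) z ∂π := lintegral_congr fun z => hcomp z
  -- sum bound
  have hsumle : ∑ k : Fin (n+1), ∫⁻ z, h k z ∂π ≤ ENNReal.ofReal α * (n+1 : ℝ≥0∞) := by
    rw [← lintegral_finset_sum _ (fun k _ => hhmeas k)]
    have hpt : ∀ z : Fin (n+1) → Z, ∑ k : Fin (n+1), h k z ≤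
        ENNReal.ofReal α * ENNReal.ofReal (∑ j, w (z j)) := by
      intro z
      have h1 : ∀ k : Fin (n+1), h k z =
          ENNReal.ofReal ((Acal w V α n k).indicator (fun z => w (z k)) z) := by
        intro k
        by_cases hz : z ∈ Acal w V α n k
        · rw [hh]; simp only
          rw [Set.indicator_of_mem hz, Set.indicator_of_mem hz]
        · rw [hh]; simp only
          rw [Set.indicator_of_notMem hz, Set.indicator_of_notMem hz, ENNReal.ofReal_zero]
      rw [Finset.sum_congr rfl fun k _ => h1 k,
        ← ENNReal.ofReal_sum_of_nonneg (fun k _ => Set.indicator_nonneg (fun y _ => hw0 _) _),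
        ← ENNReal.ofReal_mul hα.1.le]
      exact ENNReal.ofReal_le_ofReal (sum_indicator_Acal_le w V α hα n hw0 z)
    calc ∫⁻ z, ∑ k : Fin (n+1), h k z ∂π
        ≤ ∫⁻ z, ENNReal.ofReal α * ENNReal.ofReal (∑ j, w (z j)) ∂π := lintegral_mono hpt
      _ = ENNReal.ofReal α * ∫⁻ z, ENNReal.ofReal (∑ j, w (z j)) ∂π := by
          rw [lintegral_const_mul _ (by
            exact (Finset.measurable_sum _ fun j _ =>
              hw.comp (measurable_pi_apply j)).ennreal_ofReal)]
      _ = ENNReal.ofReal α * (n+1 : ℝ≥0∞) := by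
          congr 1
          have : ∀ z : Fin (n+1) → Z, ENNReal.ofReal (∑ j, w (z j)) = ∑ j : Fin (n+1), W (z j) :=
            fun z => ENNReal.ofReal_sum_of_nonneg (fun j _ => hw0 _)
          have hls : (∫⁻ a : Fin (n+1) → Z, ∑ j : Fin (n+1), W (a j) ∂π)
              = ∑ j : Fin (n+1), ∫⁻ a : Fin (n+1) → Z, W (a j) ∂π :=
            lintegral_finset_sum _ fun j _ => hW.comp (measurable_pi_apply j)
          rw [lintegral_congr this, hls]
          have : ∀ j : Fin (n+1), ∫⁻ z, W (z j) ∂π = 1 := by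
            intro j
            rw [hπ, lintegral_eval_pi Q n j W hW]
            exact hwint
          rw [Finset.sum_congr rfl fun j _ => this j]
          simp [Finset.card_univ]
  -- conclude ∫ h last ≤ ofReal α
  have hlast : ∫⁻ z, h (Fin.last n) z ∂π ≤ ENNReal.ofReal α := by
    have hsum' : (n+1 : ℝ≥0∞) * ∫⁻ z, h (Fin.last n) z ∂π ≤ (n+1 : ℝ≥0∞) * ENNReal.ofReal α := by
      calc (n+1 : ℝ≥0∞) * ∫⁻ z, h (Fin.last n) z ∂π
          = ∑ k : Fin (n+1), ∫⁻ z, h k z ∂π := by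
            rw [Finset.sum_congr rfl fun k _ => hsym k]
            simp [Finset.card_univ, mul_comm]
        _ ≤ ENNReal.ofReal α * (n+1 : ℝ≥0∞) := hsumle
        _ = (n+1 : ℝ≥0∞) * ENNReal.ofReal α := mul_comm _ _
    have hne0 : ((n : ℝ≥0∞) + 1) ≠ 0 := by simp
    have hnetop : ((n : ℝ≥0∞) + 1) ≠ ⊤ := by simp
    exact (ENNReal.mul_le_mul_iff_right hne0 hnetop).mp hsum'
  -- finish
  haveI : IsProbabilityMeasure (Q.withDensity W) := withDensity_prob Q W hW hwint
  haveI hsf : ∀ i : Fin (n+1),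
      SigmaFinite ((fun i : Fin (n+1) => if i = Fin.last n then Q.withDensity W else Q) i) := by
    intro i
    by_cases hi : i = Fin.last n <;> simp only [hi, if_true, if_false] <;> infer_instance
  haveI : IsProbabilityMeasure ν := by
    rw [hν]
    refine ⟨?_⟩
    rw [Measure.pi_univ]
    refine Finset.prod_eq_one fun i _ => ?_
    by_cases hi : i = Fin.last n <;> simp [hi]
  have hEc : ν (covEvent w V α n)ᶜ ≤ ENNReal.ofReal α := hmis.trans hlast
  have hadd : ν (covEvent w V α n) + ν (covEvent w V α n)ᶜ = 1 := by
    rw [measure_add_measure_compl hE, measure_univ]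
  have h1 : ENNReal.ofReal (1 - α) + ν (covEvent w V α n)ᶜ ≤
      ν (covEvent w V α n) + ν (covEvent w V α n)ᶜ := by
    calc ENNReal.ofReal (1 - α) + ν (covEvent w V α n)ᶜ
        ≤ ENNReal.ofReal (1 - α) + ENNReal.ofReal α := add_le_add_right hEc _
      _ = 1 := by
          rw [← ENNReal.ofReal_add (by linarith [hα.2]) hα.1.le]
          norm_num
      _ = ν (covEvent w V α n) + ν (covEvent w V α n)ᶜ := hadd.symm
  exact ENNReal.le_of_add_le_add_right (measure_ne_top ν _) h1
end Aux

/-- Weighted conformal prediction with normalized weight function `ω̃`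
(`∫ ω̃ dQ = 1`, `P̃ := ω̃ · Q`): letting `R*` denote the Bayes risk of the balanced
classification problem between `P` (label `1 = true`) and `P̃` (label `0 = false`), the
coverage of the weighted split quantile is at least `1 - α - (1 - 2 R*)`. -/
theorem weighted_conformal_coverage_bayes_risk_bound
    {Z : Type*} [MeasurableSpace Z] (Q P : Measure Z)
    [IsProbabilityMeasure Q] [IsProbabilityMeasure P]
    (w : Z → ℝ) (hwmeas : Measurable w) (hw0 : ∀ z, 0 ≤ w z)
    (hwint : ∫ z, w z ∂Q = 1)
    {Ω : Type*} [MeasurableSpace Ω] (μ : Measure Ω) [IsProbabilityMeasure μ]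
    (n : ℕ) (hn : 1 ≤ n) (Zi : Fin (n + 1) → Ω → Z) (hZmeas : ∀ i, Measurable (Zi i))
    (hindep : iIndepFun Zi μ)
    (hlawQ : ∀ i : Fin n, Measure.map (Zi i.castSucc) μ = Q)
    (hlawP : Measure.map (Zi (Fin.last n)) μ = P)
    (V : Z → ℝ) (hV : Measurable V) (α : ℝ) (hα : α ∈ Set.Ioo (0 : ℝ) 1) :
    1 - α - (1 - 2 *
      (⨅ g : {g : Z → Bool // Measurable g},
        ((((1 : ℝ≥0∞) / 2) • (P.prod (Measure.dirac true)) +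
          ((1 : ℝ≥0∞) / 2) •
            ((Q.withDensity (fun z => ENNReal.ofReal (w z))).prod (Measure.dirac false)))
          {p : Z × Bool | g.1 p.1 ≠ p.2}).toReal)) ≤
      (μ {x | ((V (Zi (Fin.last n) x) : ℝ) : EReal) ≤
        wQuantile (1 - α)
          (fun i : Fin (n + 1) => w (Zi i x) / ∑ j : Fin (n + 1), w (Zi j x))
          (fun i : Fin (n + 1) =>
            if (i : ℕ) < n then ((V (Zi i x) : ℝ) : EReal) else (⊤ : EReal))}).toReal := by
  classical
  obtain ⟨hα0, hα1⟩ := hα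
  -- the tilted measure
  have hW : Measurable (fun z => ENNReal.ofReal (w z)) := hwmeas.ennreal_ofReal
  have hwInt : Integrable w Q := by
    by_contra hni
    rw [integral_undef hni] at hwint
    norm_num at hwint
  have hWint : ∫⁻ z, ENNReal.ofReal (w z) ∂Q = 1 := by
    rw [← ofReal_integral_eq_lintegral_ofReal hwInt (Filter.Eventually.of_forall hw0), hwint,
      ENNReal.ofReal_one]
  set Pt : Measure Z := Q.withDensity (fun z => ENNReal.ofReal (w z)) with hPt
  haveI : IsProbabilityMeasure Pt := withDensity_prob Q _ hW hWint
  -- the joint law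
  set T : Ω → (Fin (n+1) → Z) := fun x i => Zi i x with hT
  have hTmeas : Measurable T := measurable_pi_lambda _ hZmeas
  set ν : Fin (n+1) → Measure Z := fun i => if i = Fin.last n then P else Q with hν
  set ν' : Fin (n+1) → Measure Z := fun i => if i = Fin.last n then Pt else Q with hν'
  haveI hνprob : ∀ i, IsProbabilityMeasure (ν i) := by
    intro i
    by_cases hi : i = Fin.last n <;> simp only [hν, hi, if_true, if_false] <;> infer_instance
  haveI hν'prob : ∀ i, IsProbabilityMeasure (ν' i) := by
    intro i
    by_cases hi : i = Fin.last n <;> simp only [hν', hi, if_true, if_false] <;> infer_instance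
  have hmap : μ.map T = Measure.pi ν := by
    refine (Measure.pi_eq fun s hs => ?_).symm
    rw [Measure.map_apply hTmeas (MeasurableSet.univ_pi hs)]
    have hpre : T ⁻¹' Set.pi Set.univ s = ⋂ i ∈ Finset.univ, Zi i ⁻¹' s i := by
      ext x
      simp [hT, Set.mem_univ_pi]
    rw [hpre, hindep.measure_inter_preimage_eq_mul Finset.univ (fun i _ => hs i)]
    refine Finset.prod_congr rfl fun i _ => ?_
    by_cases hi : i = Fin.last n
    · subst hi
      have hl : ν (Fin.last n) = P := by simp [hν]
      rw [hl, ← hlawP, Measure.map_apply (hZmeas _) (hs _)]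
    · obtain ⟨j, rfl⟩ := Fin.exists_castSucc_eq.mpr hi
      have hl : ν (Fin.castSucc j) = Q := by simp [hν, (Fin.castSucc_lt_last j).ne]
      rw [hl, ← hlawQ j, Measure.map_apply (hZmeas _) (hs _)]
  -- identify the goal event
  have hE := covEvent_measurable w V hwmeas hV α n hw0
  have hgoalset : {x | ((V (Zi (Fin.last n) x) : ℝ) : EReal) ≤
      wQuantile (1 - α)
        (fun i : Fin (n + 1) => w (Zi i x) / ∑ j : Fin (n + 1), w (Zi j x))
        (fun i : Fin (n + 1) =>
          if (i : ℕ) < n then ((V (Zi i x) : ℝ) : EReal) else (⊤ : EReal))} =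
      T ⁻¹' covEvent w V α n := rfl
  have hμE : μ {x | ((V (Zi (Fin.last n) x) : ℝ) : EReal) ≤
      wQuantile (1 - α)
        (fun i : Fin (n + 1) => w (Zi i x) / ∑ j : Fin (n + 1), w (Zi j x))
        (fun i : Fin (n + 1) =>
          if (i : ℕ) < n then ((V (Zi i x) : ℝ) : EReal) else (⊤ : EReal))} =
      Measure.pi ν (covEvent w V α n) := by
    rw [hgoalset, ← Measure.map_apply hTmeas hE, hmap]
  -- comparison of the two pi measures on the event
  set πn : Measure (Fin n → Z) := Measure.pi (fun _ : Fin n => Q) with hπn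
  set φ := MeasurableEquiv.piFinSuccAbove (fun _ : Fin (n+1) => Z) (Fin.last n) with hφ
  set B : Set (Z × (Fin n → Z)) := φ.symm ⁻¹' covEvent w V α n with hB
  have hBmeas : MeasurableSet B := φ.symm.measurable hE
  have hpre : φ ⁻¹' B = covEvent w V α n := by
    rw [hB, ← Set.preimage_comp]
    simp
  have hform : ∀ (fam : Fin (n+1) → Measure Z) (_ : ∀ i, IsProbabilityMeasure (fam i))
      (ρ : Measure Z) (_ : IsProbabilityMeasure ρ) (hlast : fam (Fin.last n) = ρ)
      (hother : ∀ j : Fin n, fam (Fin.castSucc j) = Q),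
      Measure.pi fam (covEvent w V α n) = (ρ.prod πn) B := by
    intro fam hfam ρ hρ hlast hother
    haveI := hfam
    have hmp := measurePreserving_piFinSuccAbove fam (Fin.last n)
    have h2 : (fun j : Fin n => fam ((Fin.last n).succAbove j)) = fun _ : Fin n => Q := by
      funext j
      rw [Fin.succAbove_last]
      exact hother j
    rw [hlast, h2] at hmp
    rw [← hpre, ← Measure.map_apply φ.measurable hBmeas, hmp.map_eq, hπn]
  have hformP : Measure.pi ν (covEvent w V α n) = (P.prod πn) B :=
    hform ν hνprob P inferInstance (by simp [hν]) (fun j => by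
      simp [hν, (Fin.castSucc_lt_last j).ne])
  have hformPt : Measure.pi ν' (covEvent w V α n) = (Pt.prod πn) B :=
    hform ν' hν'prob Pt inferInstance (by simp [hν']) (fun j => by
      simp [hν', (Fin.castSucc_lt_last j).ne])
  -- Hahn decomposition
  obtain ⟨A, hA, hD0, hAbound⟩ := hahn_toReal P Pt
  set D : ℝ := (Pt Aᶜ).toReal - (P Aᶜ).toReal with hD
  have hcomp : Measure.pi ν' (covEvent w V α n) ≤
      Measure.pi ν (covEvent w V α n) + ENNReal.ofReal D := by
    rw [hformPt, hformP, Measure.prod_apply_symm hBmeas, Measure.prod_apply_symm hBmeas]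
    have hpoint : ∀ y : Fin n → Z,
        Pt ((fun x => (x, y)) ⁻¹' B) ≤ P ((fun x => (x, y)) ⁻¹' B) + ENNReal.ofReal D := by
      intro y
      have hsec : MeasurableSet ((fun x => (x, y)) ⁻¹' B) := measurable_prodMk_right hBmeas
      have hb := hAbound _ hsec
      calc Pt ((fun x => (x, y)) ⁻¹' B)
          = ENNReal.ofReal ((Pt ((fun x => (x, y)) ⁻¹' B)).toReal) :=
            (ENNReal.ofReal_toReal (measure_ne_top _ _)).symm
        _ ≤ ENNReal.ofReal ((P ((fun x => (x, y)) ⁻¹' B)).toReal + D) :=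
            ENNReal.ofReal_le_ofReal hb
        _ = ENNReal.ofReal ((P ((fun x => (x, y)) ⁻¹' B)).toReal) + ENNReal.ofReal D :=
            ENNReal.ofReal_add ENNReal.toReal_nonneg hD0
        _ = P ((fun x => (x, y)) ⁻¹' B) + ENNReal.ofReal D := by
            rw [ENNReal.ofReal_toReal (measure_ne_top _ _)]
    calc ∫⁻ y, Pt ((fun x => (x, y)) ⁻¹' B) ∂πn
        ≤ ∫⁻ y, (P ((fun x => (x, y)) ⁻¹' B) + ENNReal.ofReal D) ∂πn := lintegral_mono hpoint
      _ = ∫⁻ y, P ((fun x => (x, y)) ⁻¹' B) ∂πn + ENNReal.ofReal D := by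
          rw [lintegral_add_right _ measurable_const, lintegral_const, measure_univ, mul_one]
  -- core coverage
  have hcore : ENNReal.ofReal (1 - α) ≤ Measure.pi ν' (covEvent w V α n) := by
    have := core_coverage Q w V hwmeas hV hw0 hWint α ⟨hα0, hα1⟩ n
    exact this
  -- numeric extraction
  set c : ℝ := (Measure.pi ν (covEvent w V α n)).toReal with hc
  have hcD : 1 - α ≤ c + D := by
    have h2 : ENNReal.ofReal (1 - α) ≤ Measure.pi ν (covEvent w V α n) + ENNReal.ofReal D :=
      hcore.trans hcomp
    have hfin : Measure.pi ν (covEvent w V α n) + ENNReal.ofReal D ≠ ⊤ :=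
      ENNReal.add_ne_top.mpr ⟨measure_ne_top _ _, ENNReal.ofReal_ne_top⟩
    have h3 := ENNReal.toReal_mono hfin h2
    rw [ENNReal.toReal_ofReal (by linarith), ENNReal.toReal_add (measure_ne_top _ _)
      ENNReal.ofReal_ne_top, ENNReal.toReal_ofReal hD0] at h3
    exact h3
  -- the classifier given by A
  set g : Z → Bool := fun z => if z ∈ A then true else false with hg
  have hgmeas : Measurable g := Measurable.ite hA measurable_const measurable_const
  have hSeq : {p : Z × Bool | g p.1 ≠ p.2} = (Aᶜ ×ˢ {true}) ∪ (A ×ˢ {false}) := by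
    ext ⟨z, b⟩
    cases b <;> by_cases hz : z ∈ A <;> simp [hg, hz]
  have hSmeas : MeasurableSet {p : Z × Bool | g p.1 ≠ p.2} := by
    rw [hSeq]
    exact ((hA.compl.prod MeasurableSpace.measurableSet_top)).union
      (hA.prod MeasurableSpace.measurableSet_top)
  have hS1 : (P.prod (Measure.dirac true)) {p : Z × Bool | g p.1 ≠ p.2} = P Aᶜ := by
    rw [hSeq, measure_union ?hdis (hA.prod MeasurableSpace.measurableSet_top),
      Measure.prod_prod, Measure.prod_prod]
    · rw [Measure.dirac_apply' _ MeasurableSpace.measurableSet_top,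
        Measure.dirac_apply' _ MeasurableSpace.measurableSet_top]
      simp
    case hdis =>
      refine Set.disjoint_left.mpr ?_
      rintro ⟨z, b⟩ ⟨_, hb1⟩ ⟨_, hb2⟩
      simp only [Set.mem_singleton_iff] at hb1 hb2
      rw [hb1] at hb2
      exact Bool.noConfusion hb2
  have hS2 : (Pt.prod (Measure.dirac false)) {p : Z × Bool | g p.1 ≠ p.2} = Pt A := by
    rw [hSeq, measure_union ?hdis (hA.prod MeasurableSpace.measurableSet_top),
      Measure.prod_prod, Measure.prod_prod]
    · rw [Measure.dirac_apply' _ MeasurableSpace.measurableSet_top,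
        Measure.dirac_apply' _ MeasurableSpace.measurableSet_top]
      simp
    case hdis =>
      refine Set.disjoint_left.mpr ?_
      rintro ⟨z, b⟩ ⟨_, hb1⟩ ⟨_, hb2⟩
      simp only [Set.mem_singleton_iff] at hb1 hb2
      rw [hb1] at hb2
      exact Bool.noConfusion hb2
  have hrisk : ((((1 : ℝ≥0∞) / 2) • (P.prod (Measure.dirac true)) +
      ((1 : ℝ≥0∞) / 2) • (Pt.prod (Measure.dirac false)))
        {p : Z × Bool | g p.1 ≠ p.2}).toReal =
      (P Aᶜ).toReal / 2 + (Pt A).toReal / 2 := by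
    rw [Measure.add_apply, Measure.smul_apply, Measure.smul_apply, smul_eq_mul, smul_eq_mul,
      hS1, hS2, ENNReal.toReal_add (by
        exact ENNReal.mul_ne_top (by norm_num) (measure_ne_top _ _)) (by
        exact ENNReal.mul_ne_top (by norm_num) (measure_ne_top _ _)),
      ENNReal.toReal_mul, ENNReal.toReal_mul]
    norm_num
    ring
  have hbdd : BddBelow (Set.range (fun g' : {g : Z → Bool // Measurable g} =>
      ((((1 : ℝ≥0∞) / 2) • (P.prod (Measure.dirac true)) +
        ((1 : ℝ≥0∞) / 2) • (Pt.prod (Measure.dirac false)))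
        {p : Z × Bool | g'.1 p.1 ≠ p.2}).toReal)) := by
    refine ⟨0, ?_⟩
    rintro x ⟨g', rfl⟩
    exact ENNReal.toReal_nonneg
  have hinf_le : (⨅ g' : {g : Z → Bool // Measurable g},
      ((((1 : ℝ≥0∞) / 2) • (P.prod (Measure.dirac true)) +
        ((1 : ℝ≥0∞) / 2) • (Pt.prod (Measure.dirac false)))
        {p : Z × Bool | g'.1 p.1 ≠ p.2}).toReal) ≤
      (P Aᶜ).toReal / 2 + (Pt A).toReal / 2 := by
    rw [← hrisk]
    exact ciInf_le hbdd ⟨g, hgmeas⟩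
  -- probability complement identities
  have hPA : (P A).toReal + (P Aᶜ).toReal = 1 := by
    have h1 : P A + P Aᶜ = 1 := by rw [measure_add_measure_compl hA, measure_univ]
    have := congrArg ENNReal.toReal h1
    rw [ENNReal.toReal_add (measure_ne_top _ _) (measure_ne_top _ _)] at this
    simpa using this
  have hPtA : (Pt A).toReal + (Pt Aᶜ).toReal = 1 := by
    have h1 : Pt A + Pt Aᶜ = 1 := by rw [measure_add_measure_compl hA, measure_univ]
    have := congrArg ENNReal.toReal h1
    rw [ENNReal.toReal_add (measure_ne_top _ _) (measure_ne_top _ _)] at this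
    simpa using this
  rw [hμE]
  linarith [hinf_le, hcD]
end

section
/- Let d, n ≥ 1 and α ∈ (0,1). Let κ be a Markov kernel from X_NA × ℝ to ℝ^d (a generalized distributional imputation). On a common probability space, let (X̃^1, Y^1, X̂^1), …, (X̃^{n+1}, Y^{n+1}, X̂^{n+1}) be i.i.d. random elements of (X_NA × ℝ) × ℝ^d such that the conditional law of X̂^i given (X̃^i, Y^i) is κ(X̃^i, Y^i). Let s : ℝ^d × ℝ → ℝ be measurable, and define the split conformal quantile q̂ := Quantile_{1−α}( (Σ_{i=1}^n δ_{s(X̂^i, Y^i)} + δ_{+∞})/(n+1) ) and the prediction set Ĉ(x) := { y ∈ ℝ : s(x, y) ≤ q̂ } for x ∈ ℝ^d. Then P( Y^{n+1} ∈ Ĉ(X̂^{n+1}) ) ≥ 1 − α; in particular, split conformal prediction after distributional imputation of both the calibration points and the test point is marginally valid at level α. -/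
open MeasureTheory ProbabilityTheory
open scoped ENNReal

universe u

section Aux

open Finset

/-- unfolding of the split quantile condition -/
lemma splitQuantile_le_iff {n : ℕ} {α y : ℝ} (hα0 : 0 < α) (hα1 : α < 1) (sc : Fin n → ℝ) :
    ((y : EReal) ≤ splitQuantile (1 - α) sc) ↔
      (Finset.univ.filter (fun i => sc i < y)).card < ⌈(1 - α) * (n + 1)⌉₊ := by
  classical
  set t := ⌈(1 - α) * (n + 1)⌉₊ with ht
  have hnpos : (0 : ℝ) < (n : ℝ) + 1 := by positivity
  -- the condition in the quantile definition
  have hcond : ∀ r : ℝ,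
      ((1 - α) ≤ ∑ i ∈ Finset.univ.filter
          (fun i : Option (Fin n) => (i.elim (⊤ : EReal) (fun j => ((sc j : ℝ) : EReal))) ≤ (r : EReal)),
          (1 / (n + 1 : ℝ))) ↔
        t ≤ (Finset.univ.filter (fun i => sc i ≤ r)).card := by
    intro r
    have hfilter : Finset.univ.filter
        (fun i : Option (Fin n) => (i.elim (⊤ : EReal) (fun j => ((sc j : ℝ) : EReal))) ≤ (r : EReal))
        = (Finset.univ.filter (fun i => sc i ≤ r)).map Function.Embedding.some := by
      ext i
      cases i with
      | none =>
        simp [top_le_iff, EReal.coe_ne_top]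
      | some j =>
        simp [EReal.coe_le_coe_iff]
    rw [hfilter, Finset.sum_map]
    simp only [Function.Embedding.some_apply, Finset.sum_const, nsmul_eq_mul]
    rw [mul_one_div, le_div_iff₀ hnpos, ht]
    rw [Nat.ceil_le]
  rw [splitQuantile, wQuantile, le_sInf_iff]
  constructor
  · intro h
    by_contra hL
    push_neg at hL
    set F := Finset.univ.filter (fun i => sc i < y) with hF
    have hFne : F.Nonempty := by
      rw [← Finset.card_pos]
      have : 0 < t := by
        rw [ht]
        exact Nat.ceil_pos.mpr (by nlinarith)
      omega
    set r := (F.image sc).max' (hFne.image sc) with hr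
    have hrmem : r ∈ F.image sc := Finset.max'_mem _ _
    obtain ⟨i₀, hi₀, hri₀⟩ := Finset.mem_image.mp hrmem
    have hry : r < y := by
      rw [← hri₀]
      exact (Finset.mem_filter.mp hi₀).2
    have hsub : F ⊆ Finset.univ.filter (fun i => sc i ≤ r) := by
      intro i hi
      refine Finset.mem_filter.mpr ⟨Finset.mem_univ _, ?_⟩
      exact Finset.le_max' _ _ (Finset.mem_image_of_mem sc hi)
    have hcount : t ≤ (Finset.univ.filter (fun i => sc i ≤ r)).card :=
      le_trans hL (Finset.card_le_card hsub)
    have := h (r : EReal) ⟨r, rfl, (hcond r).mpr hcount⟩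
    exact absurd (EReal.coe_le_coe_iff.mp this) (not_le.mpr hry)
  · rintro hL z ⟨r, rfl, hr⟩
    rw [EReal.coe_le_coe_iff]
    by_contra hyr
    push_neg at hyr
    have hsub : Finset.univ.filter (fun i => sc i ≤ r) ⊆ Finset.univ.filter (fun i => sc i < y) := by
      intro i hi
      exact Finset.mem_filter.mpr ⟨Finset.mem_univ _, lt_of_le_of_lt (Finset.mem_filter.mp hi).2 hyr⟩
    have := (hcond r).mp hr
    have := Finset.card_le_card hsub
    omega

/-- the combinatorial rank lemma -/
lemma card_filter_rank_le {ι : Type*} [Fintype ι] (v : ι → ℝ) (t : ℕ)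
    (ht : t ≤ Fintype.card ι) :
    (Finset.univ.filter (fun j => t ≤ (Finset.univ.filter (fun i => v i < v j)).card)).card
      ≤ Fintype.card ι - t := by
  classical
  set A := Finset.univ.filter (fun j => (Finset.univ.filter (fun i => v i < v j)).card < t)
    with hA
  have hcardA : t ≤ A.card := by
    by_contra h
    push_neg at h
    have hne : (Aᶜ : Finset ι).Nonempty := by
      rw [← Finset.card_pos, Finset.card_compl]
      omega
    obtain ⟨j₀, hj₀, hmin⟩ := Finset.exists_min_image (Aᶜ) v hne
    have hsub : Finset.univ.filter (fun i => v i < v j₀) ⊆ A := by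
      intro i hi
      by_contra hiA
      have : v j₀ ≤ v i := hmin i (Finset.mem_compl.mpr hiA)
      exact absurd (Finset.mem_filter.mp hi).2 (not_lt.mpr this)
    have h1 : (Finset.univ.filter (fun i => v i < v j₀)).card ≤ A.card :=
      Finset.card_le_card hsub
    have hj₀' : ¬ ((Finset.univ.filter (fun i => v i < v j₀)).card < t) := by
      have := Finset.mem_compl.mp hj₀
      rw [hA] at this
      simpa using this
    omega
  have hBA : Finset.univ.filter (fun j => t ≤ (Finset.univ.filter (fun i => v i < v j)).card)
      = Aᶜ := by
    ext j
    simp [hA, not_lt]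
  rw [hBA, Finset.card_compl]
  omega

/-- reindex a filter card along castSucc when last is excluded -/
lemma card_filter_castSucc {n : ℕ} (p : Fin (n + 1) → Prop) [DecidablePred p]
    (hlast : ¬ p (Fin.last n)) :
    (Finset.univ.filter p).card
      = (Finset.univ.filter (fun i : Fin n => p i.castSucc)).card := by
  classical
  have h1 : (Finset.univ.filter p)
      = (Finset.univ.filter (fun i : Fin n => p i.castSucc)).map Fin.castSuccEmb := by
    ext j
    simp only [Finset.mem_filter, Finset.mem_univ, true_and, Finset.mem_map,
      Fin.coe_castSuccEmb]
    constructor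
    · intro hj
      rcases Fin.eq_castSucc_or_eq_last j with ⟨i, rfl⟩ | rfl
      · exact ⟨i, by simpa using hj, rfl⟩
      · exact absurd hj hlast
    · rintro ⟨i, hi, rfl⟩
      simpa using hi
  rw [h1, Finset.card_map]

/-- filter card is invariant under permutation reindexing -/
lemma card_filter_comp_equiv {ι : Type*} [Fintype ι] [DecidableEq ι] (σ : Equiv.Perm ι)
    (p : ι → Prop) [DecidablePred p] :
    (Finset.univ.filter (fun i => p (σ i))).card = (Finset.univ.filter p).card := by
  classical
  have h : Finset.univ.filter (fun i => p (σ i))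
      = (Finset.univ.filter p).map σ.symm.toEmbedding := by
    ext i
    simp [Equiv.symm_apply_eq]
  rw [h, Finset.card_map]

/-- iid random variables have product joint law -/
lemma iid_map_pi {Ω E : Type*} [MeasurableSpace Ω] [MeasurableSpace E] {k : ℕ}
    (μ : Measure Ω) [IsProbabilityMeasure μ] (f : Fin k → Ω → E)
    (hf : ∀ i, Measurable (f i))
    (hindep : iIndepFun f μ)
    (m : Measure E) [IsProbabilityMeasure m] (hlaw : ∀ i, Measure.map (f i) μ = m) :
    Measure.map (fun ω i => f i ω) μ = Measure.pi (fun _ => m) := by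
  refine (Measure.pi_eq fun sets hsets => ?_).symm
  rw [Measure.map_apply (measurable_pi_lambda _ hf) (MeasurableSet.univ_pi hsets)]
  have hpre : (fun ω i => f i ω) ⁻¹' Set.pi Set.univ sets
      = ⋂ i ∈ (Finset.univ : Finset (Fin k)), f i ⁻¹' sets i := by
    ext ω
    simp [Set.mem_pi]
  rw [hpre, hindep.measure_inter_preimage_eq_mul Finset.univ (fun i _ => hsets i)]
  refine Finset.prod_congr rfl fun i _ => ?_
  rw [← hlaw i, Measure.map_apply (hf i) (hsets i)]

/-- product measure with identical factors is permutation invariant -/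
lemma pi_map_perm {E : Type*} [MeasurableSpace E] (m : Measure E) [IsProbabilityMeasure m]
    {k : ℕ} (σ : Equiv.Perm (Fin k)) :
    Measure.map (fun v : Fin k → E => v ∘ σ) (Measure.pi fun _ => m)
      = Measure.pi fun _ => m := by
  have hmeas : Measurable (fun v : Fin k → E => v ∘ σ) :=
    measurable_pi_lambda _ fun i => measurable_pi_apply (σ i)
  refine (Measure.pi_eq fun sets hsets => ?_).symm
  rw [Measure.map_apply hmeas (MeasurableSet.univ_pi hsets)]
  have hpre : (fun v : Fin k → E => v ∘ σ) ⁻¹' Set.pi Set.univ sets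
      = Set.pi Set.univ (fun i => sets (σ.symm i)) := by
    ext v
    simp only [Set.mem_preimage, Set.mem_pi, Set.mem_univ, forall_true_left, Function.comp]
    constructor
    · intro h i
      simpa using h (σ.symm i)
    · intro h i
      simpa using h (σ i)
  rw [hpre, Measure.pi_pi]
  exact Equiv.prod_comp σ.symm (fun i => m (sets i))

end Aux

/-- Marginal validity of impute-then-split-CP with a distributional
imputation given by a Markov kernel `κ`: if the triples `(X̃^i, Y^i, X̂^i)` are i.i.d. with
joint law `ν ⊗ₘ κ` (so that the conditional law of `X̂^i` given `(X̃^i, Y^i)` is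
`κ(X̃^i, Y^i)`), then the split conformal set built on the imputed calibration scores covers
`Y^{n+1}` at the imputed test point with probability `≥ 1 - α`. -/
theorem impute_then_split_conformal_marginally_valid
    (d n : ℕ) (hd : 1 ≤ d) (hn : 1 ≤ n) (α : ℝ) (hα : α ∈ Set.Ioo (0 : ℝ) 1)
    (κ : ProbabilityTheory.Kernel ((Fin d → Option ℝ) × ℝ) (Fin d → ℝ))
    [ProbabilityTheory.IsMarkovKernel κ]
    (ν : Measure ((Fin d → Option ℝ) × ℝ)) [IsProbabilityMeasure ν]
    {Ω : Type*} [MeasurableSpace Ω] (μ : Measure Ω) [IsProbabilityMeasure μ]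
    (W : Fin (n + 1) → Ω → ((Fin d → Option ℝ) × ℝ) × (Fin d → ℝ))
    (hWmeas : ∀ i, Measurable (W i))
    (hWiid : iIndepFun W μ)
    (hWlaw : ∀ i, Measure.map (W i) μ = ν.compProd κ)
    (s : (Fin d → ℝ) × ℝ → ℝ) (hs : Measurable s) :
    1 - α ≤
      (μ {x | ((s ((W (Fin.last n) x).2, (W (Fin.last n) x).1.2) : ℝ) : EReal) ≤
        splitQuantile (1 - α)
          (fun i : Fin n => s ((W i.castSucc x).2, (W i.castSucc x).1.2))}).toReal := by
  classical
  obtain ⟨hα0, hα1⟩ := hα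
  set t := ⌈(1 - α) * (n + 1)⌉₊ with ht_def
  have hnpos : (0 : ℝ) < (n : ℝ) + 1 := by positivity
  have ht_le : t ≤ n + 1 := by
    rw [ht_def, Nat.ceil_le]
    push_cast
    nlinarith
  have ht_ge : (1 - α) * (n + 1) ≤ (t : ℝ) := Nat.le_ceil _
  -- the score functions
  set g : ((Fin d → Option ℝ) × ℝ) × (Fin d → ℝ) → ℝ := fun z => s (z.2, z.1.2) with hg_def
  have hgm : Measurable g := hs.comp (measurable_snd.prodMk measurable_fst.snd)
  set S : Fin (n + 1) → Ω → ℝ := fun i ω => g (W i ω) with hS_def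
  have hSm : ∀ i, Measurable (S i) := fun i => hgm.comp (hWmeas i)
  set m : Measure ℝ := Measure.map g (ν.compProd κ) with hm_def
  haveI : IsProbabilityMeasure m := Measure.isProbabilityMeasure_map hgm.aemeasurable
  have hSindep : iIndepFun S μ := hWiid.comp (fun _ => g) (fun _ => hgm)
  have hSlaw : ∀ i, Measure.map (S i) μ = m := fun i => by
    rw [hm_def, ← hWlaw i, Measure.map_map hgm (hWmeas i)]
    rfl
  set T : Ω → Fin (n + 1) → ℝ := fun ω i => S i ω with hT_def
  have hTm : Measurable T := measurable_pi_lambda _ hSm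
  have hTlaw : Measure.map T μ = Measure.pi (fun _ => m) := iid_map_pi μ S hSm hSindep m hSlaw
  -- rank sets
  set N : Fin (n + 1) → (Fin (n + 1) → ℝ) → ℕ :=
    fun j v => (Finset.univ.filter (fun i => v i < v j)).card with hN_def
  have hNmeas : ∀ j, Measurable (N j) := by
    intro j
    have : N j = fun v => ∑ i : Fin (n + 1), if v i < v j then 1 else 0 := by
      funext v
      exact Finset.card_filter _ _
    rw [this]
    exact Finset.measurable_sum _ fun i _ =>
      Measurable.ite (measurableSet_lt (measurable_pi_apply i) (measurable_pi_apply j))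
        measurable_const measurable_const
  set B : Fin (n + 1) → Set (Fin (n + 1) → ℝ) := fun j => {v | t ≤ N j v} with hB_def
  have hBmeas : ∀ j, MeasurableSet (B j) := fun j => (hNmeas j) measurableSet_Ici
  set A : Fin (n + 1) → Set Ω := fun j => T ⁻¹' B j with hA_def
  have hAmeas : ∀ j, MeasurableSet (A j) := fun j => hTm (hBmeas j)
  -- the event in the statement is the complement of A (last)
  have hset : {x | ((s ((W (Fin.last n) x).2, (W (Fin.last n) x).1.2) : ℝ) : EReal) ≤
        splitQuantile (1 - α)
          (fun i : Fin n => s ((W i.castSucc x).2, (W i.castSucc x).1.2))}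
      = (A (Fin.last n))ᶜ := by
    ext ω
    simp only [Set.mem_setOf_eq, hA_def, Set.mem_compl_iff, Set.mem_preimage, hB_def,
      Set.mem_setOf_eq, not_le]
    rw [splitQuantile_le_iff hα0 hα1]
    have hNval : N (Fin.last n) (T ω)
        = (Finset.univ.filter (fun i : Fin n =>
            s ((W i.castSucc ω).2, (W i.castSucc ω).1.2)
              < s ((W (Fin.last n) ω).2, (W (Fin.last n) ω).1.2))).card :=
      card_filter_castSucc (p := fun i : Fin (n + 1) =>
        s ((W i ω).2, (W i ω).1.2) < s ((W (Fin.last n) ω).2, (W (Fin.last n) ω).1.2)) (by simp)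
    rw [hNval]
  -- exchangeability : all A j have the same probability
  have hAeq : ∀ j, μ (A j) = μ (A (Fin.last n)) := by
    intro j
    have hswap : ∀ v : Fin (n + 1) → ℝ, (v ∘ Equiv.swap j (Fin.last n)) ∈ B (Fin.last n) ↔ v ∈ B j := by
      intro v
      simp only [hB_def, Set.mem_setOf_eq, hN_def, Function.comp]
      have h1 : (Equiv.swap j (Fin.last n)) (Fin.last n) = j := Equiv.swap_apply_right _ _
      have h2 : (Finset.univ.filter
            (fun i => v ((Equiv.swap j (Fin.last n)) i) < v ((Equiv.swap j (Fin.last n)) (Fin.last n)))).card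
          = (Finset.univ.filter (fun i => v i < v j)).card := by
        rw [h1]
        exact card_filter_comp_equiv (Equiv.swap j (Fin.last n)) (fun i => v i < v j)
      rw [h2]
    have hpre : B j = (fun v : Fin (n + 1) → ℝ => v ∘ Equiv.swap j (Fin.last n)) ⁻¹' B (Fin.last n) := by
      ext v
      exact (hswap v).symm
    have hσm : Measurable (fun v : Fin (n + 1) → ℝ => v ∘ Equiv.swap j (Fin.last n)) :=
      measurable_pi_lambda _ fun i => measurable_pi_apply _
    calc μ (A j) = Measure.map T μ (B j) := (Measure.map_apply hTm (hBmeas j)).symm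
      _ = Measure.pi (fun _ => m) (B j) := by rw [hTlaw]
      _ = Measure.map (fun v : Fin (n + 1) → ℝ => v ∘ Equiv.swap j (Fin.last n))
            (Measure.pi fun _ => m) (B (Fin.last n)) := by
          rw [Measure.map_apply hσm (hBmeas (Fin.last n)), ← hpre]
      _ = Measure.pi (fun _ => m) (B (Fin.last n)) := by rw [pi_map_perm]
      _ = Measure.map T μ (B (Fin.last n)) := by rw [hTlaw]
      _ = μ (A (Fin.last n)) := Measure.map_apply hTm (hBmeas (Fin.last n))
  -- sum bound
  have hsum : ∑ j : Fin (n + 1), μ (A j) ≤ ((n + 1 - t : ℕ) : ℝ≥0∞) := by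
    have h1 : ∀ j : Fin (n + 1), μ (A j) = ∫⁻ ω, (A j).indicator 1 ω ∂μ :=
      fun j => (lintegral_indicator_one (hAmeas j)).symm
    calc ∑ j : Fin (n + 1), μ (A j)
        = ∑ j : Fin (n + 1), ∫⁻ ω, (A j).indicator 1 ω ∂μ := by
          exact Finset.sum_congr rfl fun j _ => h1 j
      _ = ∫⁻ ω, ∑ j : Fin (n + 1), (A j).indicator 1 ω ∂μ := by
          rw [lintegral_finset_sum]
          exact fun j _ => (measurable_one.indicator (hAmeas j))
      _ ≤ ∫⁻ _, ((n + 1 - t : ℕ) : ℝ≥0∞) ∂μ := by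
          refine lintegral_mono fun ω => ?_
          have hcard : ∑ j : Fin (n + 1), (A j).indicator (1 : Ω → ℝ≥0∞) ω
              = ((Finset.univ.filter (fun j : Fin (n + 1) => ω ∈ A j)).card : ℝ≥0∞) := by
            rw [Finset.card_filter]
            push_cast
            refine Finset.sum_congr rfl fun j _ => ?_
            by_cases hj : ω ∈ A j <;> simp [Set.indicator_apply, hj]
          rw [hcard]
          have hfilter : (Finset.univ.filter (fun j : Fin (n + 1) => ω ∈ A j))
              = Finset.univ.filter
                  (fun j => t ≤ (Finset.univ.filter (fun i => T ω i < T ω j)).card) := by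
            refine Finset.filter_congr fun j _ => ?_
            simp [hA_def, hB_def, hN_def]
          rw [hfilter]
          have := card_filter_rank_le (T ω) t (by simpa using ht_le)
          simp only [Fintype.card_fin] at this
          exact (Nat.cast_le (α := ℝ≥0∞)).mpr this
      _ = ((n + 1 - t : ℕ) : ℝ≥0∞) := by
          rw [lintegral_const, measure_univ, mul_one]
  -- hence (n+1) * μ (A last) ≤ n + 1 - t
  have hmain : ((n + 1 : ℕ) : ℝ≥0∞) * μ (A (Fin.last n)) ≤ ((n + 1 - t : ℕ) : ℝ≥0∞) := by
    have : ∑ j : Fin (n + 1), μ (A j) = ((n + 1 : ℕ) : ℝ≥0∞) * μ (A (Fin.last n)) := by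
      rw [Finset.sum_congr rfl fun j _ => hAeq j, Finset.sum_const, Finset.card_univ,
        Fintype.card_fin, nsmul_eq_mul]
    rw [← this]
    exact hsum
  have hAlast_le : (μ (A (Fin.last n))).toReal ≤ α := by
    have h2 := ENNReal.toReal_mono (by simp) hmain
    rw [ENNReal.toReal_mul] at h2
    have e1 : (((n + 1 : ℕ) : ℝ≥0∞)).toReal = (n : ℝ) + 1 := by
      rw [ENNReal.toReal_natCast]
      push_cast
      ring
    have e2 : (((n + 1 - t : ℕ) : ℝ≥0∞)).toReal = ((n + 1 - t : ℕ) : ℝ) :=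
      ENNReal.toReal_natCast _
    rw [e1, e2] at h2
    have e3 : ((n + 1 - t : ℕ) : ℝ) = ((n : ℝ) + 1) - (t : ℝ) := by
      rw [Nat.cast_sub ht_le]
      push_cast
      ring
    rw [e3] at h2
    nlinarith [ht_ge, ENNReal.toReal_nonneg (a := μ (A (Fin.last n)))]
  -- conclude
  rw [hset]
  have hcompl : μ (A (Fin.last n))ᶜ = 1 - μ (A (Fin.last n)) :=
    prob_compl_eq_one_sub (hAmeas (Fin.last n))
  rw [hcompl, ENNReal.toReal_sub_of_le prob_le_one ENNReal.one_ne_top, ENNReal.toReal_one]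
  linarith [hAlast_le]
end

section
/- Let n ≥ 1 and α ∈ (0,1), and let S^1, …, S^{n+1} be i.i.d. real-valued random variables on a common probability space. Then P( S^{n+1} ≤ Quantile_{1−α}( (Σ_{i=1}^n δ_{S^i} + δ_{+∞})/(n+1) ) ) ≥ 1 − α. -/
open MeasureTheory ProbabilityTheory
open scoped ENNReal

universe u

section Aux

lemma aux_count {m k : ℕ} (hk : k ≤ m) (y : Fin m → ℝ) :
    k ≤ (Finset.univ.filter fun j : Fin m =>
      (Finset.univ.filter fun i : Fin m => y i < y j).card < k).card := by
  set B := Finset.univ.filter fun j : Fin m =>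
      (Finset.univ.filter fun i : Fin m => y i < y j).card < k with hBdef
  by_cases hB : B = Finset.univ
  · rw [hB]; simpa using hk
  · have hne : (Finset.univ \ B).Nonempty := by
      rw [Finset.sdiff_nonempty]
      intro hsub
      exact hB (Finset.univ_subset_iff.mp hsub)
    obtain ⟨j, hjmem, hmin⟩ := Finset.exists_min_image (Finset.univ \ B) y hne
    have hjB : j ∉ B := (Finset.mem_sdiff.mp hjmem).2
    have hrank : k ≤ (Finset.univ.filter fun i : Fin m => y i < y j).card := by
      by_contra hcon
      exact hjB (Finset.mem_filter.mpr ⟨Finset.mem_univ j, not_le.mp hcon⟩)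
    refine hrank.trans (Finset.card_le_card fun i hi => ?_)
    have hyi : y i < y j := (Finset.mem_filter.mp hi).2
    by_contra hiB
    exact absurd (hmin i (Finset.mem_sdiff.mpr ⟨Finset.mem_univ i, hiB⟩)) (not_le.mpr hyi)

lemma card_filter_some' {n : ℕ} (P : Option (Fin n) → Prop) [DecidablePred P] (h0 : ¬ P none) :
    (Finset.univ.filter P).card = (Finset.univ.filter fun j => P (some j)).card := by
  symm
  apply Finset.card_bij (fun j _ => some j)
  · intro a ha
    exact Finset.mem_filter.mpr ⟨Finset.mem_univ _, (Finset.mem_filter.mp ha).2⟩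
  · intro a _ b _ h; exact Option.some_injective _ h
  · intro b hb
    match b with
    | none => exact absurd (Finset.mem_filter.mp hb).2 h0
    | some j => exact ⟨j, Finset.mem_filter.mpr ⟨Finset.mem_univ _, (Finset.mem_filter.mp hb).2⟩, rfl⟩

lemma card_filter_perm {m : ℕ} (σ : Equiv.Perm (Fin m)) (P : Fin m → Prop) [DecidablePred P] :
    (Finset.univ.filter fun i => P (σ i)).card = (Finset.univ.filter P).card := by
  apply Finset.card_bij (fun i _ => σ i)
  · intro a ha
    exact Finset.mem_filter.mpr ⟨Finset.mem_univ _, (Finset.mem_filter.mp ha).2⟩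
  · intro a _ b _ h; exact σ.injective h
  · intro b hb
    exact ⟨σ.symm b, Finset.mem_filter.mpr ⟨Finset.mem_univ _, by
      simpa using (Finset.mem_filter.mp hb).2⟩, by simp⟩

lemma le_splitQuantile {n : ℕ} (α : ℝ) (sc : Fin n → ℝ) (t : ℝ)
    (h : (Finset.univ.filter fun i : Fin n => sc i < t).card < ⌈(1 - α) * ((n : ℝ) + 1)⌉₊) :
    (t : EReal) ≤ splitQuantile (1 - α) sc := by
  refine le_sInf fun z hz => ?_
  obtain ⟨r, rfl, hr⟩ := hz
  rw [EReal.coe_le_coe_iff]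
  by_contra hrt
  push_neg at hrt
  set c := (Finset.univ.filter fun j : Fin n => sc j ≤ r).card with hc
  have hcard : (Finset.univ.filter (fun i : Option (Fin n) =>
      (i.elim (⊤ : EReal) (fun j => ((sc j : ℝ) : EReal))) ≤ (r : EReal))).card = c := by
    rw [card_filter_some' _ (fun hh => by simp at hh)]
    congr 1
    apply Finset.filter_congr
    intro j _
    simp [EReal.coe_le_coe_iff]
  rw [Finset.sum_const, hcard, nsmul_eq_mul] at hr
  have hn1 : (0 : ℝ) < (n : ℝ) + 1 := by positivity
  have h2 : (1 - α) * ((n : ℝ) + 1) ≤ c := by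
    rw [mul_one_div] at hr
    calc (1 - α) * ((n : ℝ) + 1) ≤ (c / ((n:ℝ)+1)) * ((n:ℝ)+1) :=
          mul_le_mul_of_nonneg_right hr (le_of_lt hn1)
      _ = c := by field_simp
  have h3 : ⌈(1 - α) * ((n : ℝ) + 1)⌉₊ ≤ c := Nat.ceil_le.mpr h2
  have h4 : c ≤ (Finset.univ.filter fun i : Fin n => sc i < t).card := by
    apply Finset.card_le_card
    intro j hj
    exact Finset.mem_filter.mpr ⟨Finset.mem_univ _,
      lt_of_le_of_lt (Finset.mem_filter.mp hj).2 hrt⟩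
  omega

lemma aux_perm {m : ℕ} (ν : Measure ℝ) [IsProbabilityMeasure ν] (σ : Equiv.Perm (Fin m)) :
    Measure.map (fun y : Fin m → ℝ => y ∘ σ) (Measure.pi fun _ => ν) = Measure.pi fun _ => ν := by
  refine (Measure.pi_eq fun s hs => ?_).symm
  rw [Measure.map_apply (show Measurable (fun y : Fin m → ℝ => y ∘ ⇑σ) from
    measurable_pi_lambda _ fun i => measurable_pi_apply (σ i)) (MeasurableSet.univ_pi hs)]
  have hpre : (fun y : Fin m → ℝ => y ∘ σ) ⁻¹' Set.pi Set.univ s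
      = Set.pi Set.univ (fun j => s (σ.symm j)) := by
    ext y
    simp only [Set.mem_preimage, Set.mem_pi, Set.mem_univ, forall_true_left, Function.comp]
    constructor
    · intro h j; simpa using h (σ.symm j)
    · intro h i; simpa using h (σ i)
  rw [hpre, Measure.pi_pi]
  exact Equiv.prod_comp σ.symm (fun j => ν (s j))

lemma aux_joint {Ω : Type*} [MeasurableSpace Ω] (μ : Measure Ω) [IsProbabilityMeasure μ]
    {m : ℕ} (S : Fin m → Ω → ℝ) (hS : ∀ i, Measurable (S i))
    (h : iIndepFun S μ) :
    Measure.map (fun ω i => S i ω) μ = Measure.pi (fun i => Measure.map (S i) μ) := by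
  haveI : ∀ i, IsProbabilityMeasure (Measure.map (S i) μ) :=
    fun i => Measure.isProbabilityMeasure_map (hS i).aemeasurable
  refine (Measure.pi_eq fun s hs => ?_).symm
  rw [Measure.map_apply (measurable_pi_lambda _ fun i => hS i) (MeasurableSet.univ_pi hs)]
  have hpre : (fun ω i => S i ω) ⁻¹' Set.pi Set.univ s = ⋂ i ∈ Finset.univ, S i ⁻¹' s i := by
    ext ω; simp [Set.mem_pi]
  rw [hpre, h.measure_inter_preimage_eq_mul Finset.univ (fun i _ => hs i)]
  exact Finset.prod_congr rfl fun i _ => (Measure.map_apply (hS i) (hs i)).symm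

end Aux


/-- Split conformal prediction with i.i.d. scores is valid:
if `S^1, …, S^{n+1}` are i.i.d. real random variables, then
`P(S^{n+1} ≤ Quantile_{1-α}((∑_{i=1}^n δ_{S^i} + δ_{+∞})/(n+1))) ≥ 1 - α`. -/
theorem split_conformal_iid_scores
    {Ω : Type*} [MeasurableSpace Ω] (μ : Measure Ω) [IsProbabilityMeasure μ]
    (n : ℕ) (hn : 1 ≤ n) (α : ℝ) (hα : α ∈ Set.Ioo (0 : ℝ) 1)
    (S : Fin (n + 1) → Ω → ℝ) (hSmeas : ∀ i, Measurable (S i))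
    (hindep : iIndepFun S μ)
    (hident : ∀ i, Measure.map (S i) μ = Measure.map (S 0) μ) :
    1 - α ≤
      (μ {x | ((S (Fin.last n) x : ℝ) : EReal) ≤
        splitQuantile (1 - α) (fun i : Fin n => S i.castSucc x)}).toReal := by
  classical
  obtain ⟨hα0, hα1⟩ := hα
  set k : ℕ := ⌈(1 - α) * ((n : ℝ) + 1)⌉₊ with hkdef
  have hk_le : k ≤ n + 1 := by
    rw [hkdef, Nat.ceil_le]
    push_cast
    nlinarith
  -- the measurable "rank" sets in the product space
  set B : Fin (n + 1) → Set (Fin (n + 1) → ℝ) := fun j =>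
    {y | (Finset.univ.filter fun i : Fin (n + 1) => y i < y j).card < k} with hBdef
  have hBmeas : ∀ j, MeasurableSet (B j) := by
    intro j
    have hg : Measurable (fun y : Fin (n + 1) → ℝ =>
        (Finset.univ.filter fun i : Fin (n + 1) => y i < y j).card) := by
      simp only [Finset.card_filter]
      apply Finset.measurable_sum
      intro i _
      exact Measurable.ite (measurableSet_lt (measurable_pi_apply i) (measurable_pi_apply j))
        measurable_const measurable_const
    exact hg ((Set.to_countable (Set.Iio k)).measurableSet)
  -- preimage sets in Ω
  set F : Ω → (Fin (n + 1) → ℝ) := fun ω i => S i ω with hFdef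
  have hFmeas : Measurable F := measurable_pi_lambda _ fun i => hSmeas i
  set A : Fin (n + 1) → Set Ω := fun j => F ⁻¹' B j with hAdef
  have hAmeas : ∀ j, MeasurableSet (A j) := fun j => hFmeas (hBmeas j)
  -- the law of F is the product measure
  set ν : Measure ℝ := Measure.map (S 0) μ with hνdef
  haveI : IsProbabilityMeasure ν := Measure.isProbabilityMeasure_map (hSmeas 0).aemeasurable
  have hlaw : Measure.map F μ = Measure.pi fun _ : Fin (n + 1) => ν := by
    rw [hFdef, aux_joint μ S hSmeas hindep]
    congr 1
    funext i
    exact hident i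
  -- all A j have the same measure
  have hμA : ∀ j, μ (A j) = μ (A (Fin.last n)) := by
    intro j
    have h1 : ∀ j', μ (A j') = (Measure.pi fun _ : Fin (n + 1) => ν) (B j') := by
      intro j'
      rw [hAdef]
      rw [← Measure.map_apply hFmeas (hBmeas j'), hlaw]
    rw [h1 j, h1 (Fin.last n)]
    set σ : Equiv.Perm (Fin (n + 1)) := Equiv.swap j (Fin.last n) with hσdef
    have hBpre : B j = (fun y : Fin (n + 1) → ℝ => y ∘ σ) ⁻¹' B (Fin.last n) := by
      ext y
      simp only [hBdef, Set.mem_preimage, Set.mem_setOf_eq, Function.comp]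
      have hσlast : σ (Fin.last n) = j := Equiv.swap_apply_right j (Fin.last n)
      simp only [hσlast]
      rw [card_filter_perm σ (fun i => y i < y j)]
    rw [hBpre, ← Measure.map_apply (show Measurable (fun y : Fin (n + 1) → ℝ => y ∘ ⇑σ) from
      measurable_pi_lambda _ fun i => measurable_pi_apply (σ i)) (hBmeas (Fin.last n)),
      aux_perm ν σ]
  -- pointwise counting bound
  have hpt : ∀ ω, (k : ℝ≥0∞) ≤ ∑ j : Fin (n + 1), (A j).indicator (fun _ => (1 : ℝ≥0∞)) ω := by
    intro ω
    have h1 := aux_count hk_le (fun i => S i ω)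
    have h2 : ((Finset.univ.filter fun j : Fin (n + 1) => ω ∈ A j).card : ℝ≥0∞)
        = ∑ j : Fin (n + 1), (A j).indicator (fun _ => (1 : ℝ≥0∞)) ω := by
      rw [Finset.card_filter]
      push_cast
      refine Finset.sum_congr rfl fun j _ => ?_
      by_cases hj : ω ∈ A j <;> simp [hj]
    have h3 : (Finset.univ.filter fun j : Fin (n + 1) => ω ∈ A j)
        = (Finset.univ.filter fun j : Fin (n + 1) =>
          (Finset.univ.filter fun i : Fin (n + 1) => S i ω < S j ω).card < k) := by
      apply Finset.filter_congr
      intro j _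
      simp only [hAdef, hBdef, Set.mem_preimage, Set.mem_setOf_eq, hFdef]
    rw [← h2, h3]
    exact_mod_cast h1
  -- integrate
  have hsum : (k : ℝ≥0∞) ≤ ∑ j : Fin (n + 1), μ (A j) := by
    calc (k : ℝ≥0∞) = ∫⁻ _, (k : ℝ≥0∞) ∂μ := by simp
      _ ≤ ∫⁻ ω, ∑ j : Fin (n + 1), (A j).indicator (fun _ => (1 : ℝ≥0∞)) ω ∂μ :=
          lintegral_mono hpt
      _ = ∑ j : Fin (n + 1), ∫⁻ ω, (A j).indicator (fun _ => (1 : ℝ≥0∞)) ω ∂μ :=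
          lintegral_finset_sum _ fun j _ => measurable_const.indicator (hAmeas j)
      _ = ∑ j : Fin (n + 1), μ (A j) := by
          refine Finset.sum_congr rfl fun j _ => ?_
          rw [lintegral_indicator (hAmeas j)]
          simp
  have hsum2 : (k : ℝ≥0∞) ≤ ((n + 1 : ℕ) : ℝ≥0∞) * μ (A (Fin.last n)) := by
    calc (k : ℝ≥0∞) ≤ ∑ j : Fin (n + 1), μ (A j) := hsum
      _ = ∑ _j : Fin (n + 1), μ (A (Fin.last n)) := Finset.sum_congr rfl fun j _ => hμA j
      _ = ((n + 1 : ℕ) : ℝ≥0∞) * μ (A (Fin.last n)) := by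
          rw [Finset.sum_const, Finset.card_univ, Fintype.card_fin, nsmul_eq_mul]
  -- A last is contained in the target set
  set T : Set Ω := {x | ((S (Fin.last n) x : ℝ) : EReal) ≤
      splitQuantile (1 - α) (fun i : Fin n => S i.castSucc x)} with hTdef
  have hAT : A (Fin.last n) ⊆ T := by
    intro ω hω
    simp only [hAdef, hBdef, Set.mem_preimage, Set.mem_setOf_eq, hFdef] at hω
    refine le_splitQuantile α _ _ (lt_of_le_of_lt ?_ hω)
    apply Finset.card_le_card_of_injOn (fun i => i.castSucc)
    · intro i hi
      exact Finset.mem_filter.mpr ⟨Finset.mem_univ _, (Finset.mem_filter.mp hi).2⟩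
    · intro a _ b _ h
      exact Fin.castSucc_injective n h
  have hμT : (k : ℝ≥0∞) ≤ ((n + 1 : ℕ) : ℝ≥0∞) * μ T :=
    hsum2.trans (mul_le_mul_right (measure_mono hAT) _)
  -- conclude
  have hTfin : μ T ≠ ⊤ := (measure_lt_top μ T).ne
  have htr : (k : ℝ) ≤ ((n : ℝ) + 1) * (μ T).toReal := by
    have h := ENNReal.toReal_mono (ENNReal.mul_ne_top (by simp) hTfin) hμT
    rw [ENNReal.toReal_mul, ENNReal.toReal_natCast, ENNReal.toReal_natCast] at h
    push_cast at h
    linarith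
  have hceil : (1 - α) * ((n : ℝ) + 1) ≤ (k : ℝ) := Nat.le_ceil _
  have hn1 : (0 : ℝ) < (n : ℝ) + 1 := by positivity
  nlinarith [hceil, htr]
end
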